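/- arXiv:1304.6011 — 4 statements merged into one kernel-verified Lean document; each statement's English description precedes it below -/
import Mathlib

section
/- Suppose n is even and s ≥ 1. Then the quotient group 𝒟/𝒫 is isomorphic to (ℤ/nℤ)^{t+1} × (ℤ/2ℤ)^{s−1}. -/
open scoped BigOperators

section Setup

variable (n s t : ℕ) [NeZero n]

/-- The vertex set: `Sum.inl (j,i)` is `z_i^j`, `Sum.inr (Sum.inl (j,i))` is `x_i^j`,
`Sum.inr (Sum.inr (j,i))` is `y_i^j`. -/
abbrev Vrt := (Fin s × ZMod n) ⊕ ((Fin t × ZMod n) ⊕ (Fin t × ZMod n))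

def zv (j : Fin s) (i : ZMod n) : Vrt n s t := Sum.inl (j, i)
def xv (j : Fin t) (i : ZMod n) : Vrt n s t := Sum.inr (Sum.inl (j, i))
def yv (j : Fin t) (i : ZMod n) : Vrt n s t := Sum.inr (Sum.inr (j, i))

/-- The involution σ₁. -/
def sig1 : Vrt n s t → Vrt n s t
  | Sum.inl (j, i) => Sum.inl (j, 1 - i)
  | Sum.inr (Sum.inl (j, i)) => Sum.inr (Sum.inr (j, 1 - i))
  | Sum.inr (Sum.inr (j, i)) => Sum.inr (Sum.inl (j, 1 - i))

/-- The involution σ₂. -/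
def sig2 : Vrt n s t → Vrt n s t
  | Sum.inl (j, i) => Sum.inl (j, 2 - i)
  | Sum.inr (Sum.inl (j, i)) => Sum.inr (Sum.inr (j, 2 - i))
  | Sum.inr (Sum.inr (j, i)) => Sum.inr (Sum.inl (j, 2 - i))

/-- The rotation ρ = σ₂ ∘ σ₁. -/
def rho : Vrt n s t → Vrt n s t := sig2 n s t ∘ sig1 n s t

/-- The index of a vertex, an element of ℤ/nℤ. -/
def idx : Vrt n s t → ZMod n
  | Sum.inl (_, i) => i
  | Sum.inr (Sum.inl (_, i)) => i
  | Sum.inr (Sum.inr (_, i)) => i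

/-- The group 𝒟 of divisors of total degree zero. -/
def DivD : AddSubgroup (Vrt n s t → ℤ) where
  carrier := {δ | ∑ v, δ v = 0}
  zero_mem' := by simp
  add_mem' := by
    intro a b ha hb
    simp only [Set.mem_setOf_eq, Pi.add_apply, Finset.sum_add_distrib] at *
    simp [ha, hb]
  neg_mem' := by
    intro a ha
    simp only [Set.mem_setOf_eq, Pi.neg_apply, Finset.sum_neg_distrib] at *
    simp [ha]

/-- 𝒫₁ : degree-zero divisors invariant under σ₁ with even values at σ₁-fixed vertices. -/
def Pgp1 : AddSubgroup (Vrt n s t → ℤ) where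
  carrier := {δ | (∑ v, δ v = 0) ∧ (∀ v, δ (sig1 n s t v) = δ v) ∧
      ∀ v, sig1 n s t v = v → Even (δ v)}
  zero_mem' := ⟨by simp, fun _ => rfl, fun _ _ => Even.zero⟩
  add_mem' := by
    rintro a b ⟨ha0, ha1, ha2⟩ ⟨hb0, hb1, hb2⟩
    refine ⟨?_, fun v => by simp [ha1 v, hb1 v], fun v hv => (ha2 v hv).add (hb2 v hv)⟩
    simp [Finset.sum_add_distrib, ha0, hb0]
  neg_mem' := by
    rintro a ⟨ha0, ha1, ha2⟩
    exact ⟨by simp [Finset.sum_neg_distrib, ha0], fun v => by simp [ha1 v],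
      fun v hv => (ha2 v hv).neg⟩

/-- 𝒫₂ : degree-zero divisors invariant under σ₂ with even values at σ₂-fixed vertices. -/
def Pgp2 : AddSubgroup (Vrt n s t → ℤ) where
  carrier := {δ | (∑ v, δ v = 0) ∧ (∀ v, δ (sig2 n s t v) = δ v) ∧
      ∀ v, sig2 n s t v = v → Even (δ v)}
  zero_mem' := ⟨by simp, fun _ => rfl, fun _ _ => Even.zero⟩
  add_mem' := by
    rintro a b ⟨ha0, ha1, ha2⟩ ⟨hb0, hb1, hb2⟩
    refine ⟨?_, fun v => by simp [ha1 v, hb1 v], fun v hv => (ha2 v hv).add (hb2 v hv)⟩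
    simp [Finset.sum_add_distrib, ha0, hb0]
  neg_mem' := by
    rintro a ⟨ha0, ha1, ha2⟩
    exact ⟨by simp [Finset.sum_neg_distrib, ha0], fun v => by simp [ha1 v],
      fun v hv => (ha2 v hv).neg⟩

/-- 𝒫₃ : degree-zero divisors invariant under ρ. -/
def Pgp3 : AddSubgroup (Vrt n s t → ℤ) where
  carrier := {δ | (∑ v, δ v = 0) ∧ ∀ v, δ (rho n s t v) = δ v}
  zero_mem' := ⟨by simp, fun _ => rfl⟩
  add_mem' := by
    rintro a b ⟨ha0, ha1⟩ ⟨hb0, hb1⟩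
    exact ⟨by simp [Finset.sum_add_distrib, ha0, hb0], fun v => by simp [ha1 v, hb1 v]⟩
  neg_mem' := by
    rintro a ⟨ha0, ha1⟩
    exact ⟨by simp [Finset.sum_neg_distrib, ha0], fun v => by simp [ha1 v]⟩

/-- 𝒫₀ : degree-zero divisors constant on each D_n-orbit with even values at the z-vertices
(the pullbacks of degree-zero divisors on G/D_n). -/
def Pgp0 : AddSubgroup (Vrt n s t → ℤ) where
  carrier := {δ | (∑ v, δ v = 0) ∧
      (∀ j i₁ i₂, δ (zv n s t j i₁) = δ (zv n s t j i₂)) ∧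
      (∀ j i₁ i₂, δ (xv n s t j i₁) = δ (xv n s t j i₂)) ∧
      (∀ j i₁ i₂, δ (xv n s t j i₁) = δ (yv n s t j i₂)) ∧
      ∀ j i, Even (δ (zv n s t j i))}
  zero_mem' := ⟨by simp, fun _ _ _ => rfl, fun _ _ _ => rfl, fun _ _ _ => rfl,
    fun _ _ => Even.zero⟩
  add_mem' := by
    rintro a b ⟨ha0, ha1, ha2, ha3, ha4⟩ ⟨hb0, hb1, hb2, hb3, hb4⟩
    exact ⟨by simp [Finset.sum_add_distrib, ha0, hb0],
      fun j i₁ i₂ => by simp [ha1 j i₁ i₂, hb1 j i₁ i₂],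
      fun j i₁ i₂ => by simp [ha2 j i₁ i₂, hb2 j i₁ i₂],
      fun j i₁ i₂ => by simp [ha3 j i₁ i₂, hb3 j i₁ i₂],
      fun j i => (ha4 j i).add (hb4 j i)⟩
  neg_mem' := by
    rintro a ⟨ha0, ha1, ha2, ha3, ha4⟩
    exact ⟨by simp [Finset.sum_neg_distrib, ha0],
      fun j i₁ i₂ => by simp [ha1 j i₁ i₂],
      fun j i₁ i₂ => by simp [ha2 j i₁ i₂],
      fun j i₁ i₂ => by simp [ha3 j i₁ i₂],
      fun j i => (ha4 j i).neg⟩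

/-- σ₁ as a permutation of the vertex set. -/
def sig1e : Equiv.Perm (Vrt n s t) where
  toFun := sig1 n s t
  invFun := sig1 n s t
  left_inv := by rintro (⟨j, i⟩ | ⟨j, i⟩ | ⟨j, i⟩) <;> simp [sig1, sub_sub_cancel]
  right_inv := by rintro (⟨j, i⟩ | ⟨j, i⟩ | ⟨j, i⟩) <;> simp [sig1, sub_sub_cancel]

/-- σ₂ as a permutation of the vertex set. -/
def sig2e : Equiv.Perm (Vrt n s t) where
  toFun := sig2 n s t
  invFun := sig2 n s t
  left_inv := by rintro (⟨j, i⟩ | ⟨j, i⟩ | ⟨j, i⟩) <;> simp [sig2, sub_sub_cancel]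
  right_inv := by rintro (⟨j, i⟩ | ⟨j, i⟩ | ⟨j, i⟩) <;> simp [sig2, sub_sub_cancel]

/-- The dihedral group D_n, realized as the subgroup of permutations of the vertex set
generated by σ₁ and σ₂. -/
def dihedral : Subgroup (Equiv.Perm (Vrt n s t)) :=
  Subgroup.closure {sig1e n s t, sig2e n s t}

/-- The multigraph with `w u v` edges between `u` and `v`, seen as a simple graph
recording adjacency. -/
def wGraph (w : Vrt n s t → Vrt n s t → ℕ) : SimpleGraph (Vrt n s t) where
  Adj u v := u ≠ v ∧ (w u v ≠ 0 ∨ w v u ≠ 0)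
  symm := ⟨by rintro u v ⟨h1, h2⟩; exact ⟨h1.symm, h2.symm⟩⟩
  loopless := ⟨by rintro v ⟨h, _⟩; exact h rfl⟩

/-- The firing divisor `L_v`. -/
def fire (w : Vrt n s t → Vrt n s t → ℕ) (v u : Vrt n s t) : ℤ :=
  if u = v then -(∑ x, (w v x : ℤ)) else (w u v : ℤ)

/-- The lattice ℒ generated by the firing divisors. -/
def FireLat (w : Vrt n s t → Vrt n s t → ℕ) : AddSubgroup (Vrt n s t → ℤ) :=
  AddSubgroup.closure (Set.range (fire n s t w))

/-- Harmonicity: no nontrivial element of D_n fixes both endpoints of an edge. -/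
def Harmonic (w : Vrt n s t → Vrt n s t → ℕ) : Prop :=
  ∀ g ∈ dihedral n s t, g ≠ 1 →
    ∀ u v : Vrt n s t, (wGraph n s t w).Adj u v → ¬(g u = u ∧ g v = v)

/-- The critical group K(G) = 𝒟/ℒ. -/
abbrev KGrp (w : Vrt n s t → Vrt n s t → ℕ) :=
  DivD n s t ⧸ ((FireLat n s t w).addSubgroupOf (DivD n s t))

/-- The image (𝒫 + ℒ)/ℒ of a subgroup 𝒫 of divisors in the critical group. -/
def Jsub (w : Vrt n s t → Vrt n s t → ℕ) (P : AddSubgroup (Vrt n s t → ℤ)) :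
    AddSubgroup (KGrp n s t w) :=
  ((P ⊔ FireLat n s t w).addSubgroupOf (DivD n s t)).map
    (QuotientAddGroup.mk' ((FireLat n s t w).addSubgroupOf (DivD n s t)))

/-- The sum map Φ : J₁ × J₂ × J₃ → K(G). -/
def Phi (w : Vrt n s t → Vrt n s t → ℕ) :
    (Jsub n s t w (Pgp1 n s t) × Jsub n s t w (Pgp2 n s t) × Jsub n s t w (Pgp3 n s t)) →+
      KGrp n s t w where
  toFun p := (p.1 : KGrp n s t w) + (p.2.1 : KGrp n s t w) + (p.2.2 : KGrp n s t w)
  map_zero' := by simp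
  map_add' := by
    intro a b
    simp only [Prod.fst_add, Prod.snd_add, AddSubgroup.coe_add]
    abel

/-- The subgroup ℒ′ of ℒ. -/
def FireLat' (w : Vrt n s t → Vrt n s t → ℕ) : AddSubgroup (Vrt n s t → ℤ) :=
  AddSubgroup.closure
    ({d | ∃ j i, d = fire n s t w (zv n s t j i)} ∪
     {d | ∃ j i₁ i₂, d = fire n s t w (xv n s t j i₁) + fire n s t w (yv n s t j i₂)} ∪
     {d | ∃ j, d = ∑ i, fire n s t w (xv n s t j i)} ∪
     {d | ∃ j, d = ∑ i, fire n s t w (yv n s t j i)})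

end Setup

namespace QDP
set_option linter.unusedSectionVars false
open Finset
variable {n s t : ℕ} [NeZero n]

open Finset

variable {n s t : ℕ} [NeZero n]

/-- indicator divisor -/
def ev (a : Vrt n s t) : Vrt n s t → ℤ := fun v => if v = a then 1 else 0

lemma sum_ev (a : Vrt n s t) : ∑ v, ev a v = 1 := by
  simp [ev]

lemma sig1_invol (v : Vrt n s t) : sig1 n s t (sig1 n s t v) = v := by
  rcases v with ⟨j, i⟩ | ⟨j, i⟩ | ⟨j, i⟩ <;> simp [sig1, sub_sub_cancel]

lemma sig2_invol (v : Vrt n s t) : sig2 n s t (sig2 n s t v) = v := by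
  rcases v with ⟨j, i⟩ | ⟨j, i⟩ | ⟨j, i⟩ <;> simp [sig2, sub_sub_cancel]

lemma idx_sig1 (v : Vrt n s t) : idx n s t (sig1 n s t v) = 1 - idx n s t v := by
  rcases v with ⟨j, i⟩ | ⟨j, i⟩ | ⟨j, i⟩ <;> rfl

lemma idx_sig2 (v : Vrt n s t) : idx n s t (sig2 n s t v) = 2 - idx n s t v := by
  rcases v with ⟨j, i⟩ | ⟨j, i⟩ | ⟨j, i⟩ <;> rfl

@[simp] lemma sig1_zv (j : Fin s) (i : ZMod n) :
    sig1 n s t (zv n s t j i) = zv n s t j (1 - i) := rfl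
@[simp] lemma sig1_xv (k : Fin t) (i : ZMod n) :
    sig1 n s t (xv n s t k i) = yv n s t k (1 - i) := rfl
@[simp] lemma sig1_yv (k : Fin t) (i : ZMod n) :
    sig1 n s t (yv n s t k i) = xv n s t k (1 - i) := rfl
@[simp] lemma sig2_zv (j : Fin s) (i : ZMod n) :
    sig2 n s t (zv n s t j i) = zv n s t j (2 - i) := rfl
@[simp] lemma sig2_xv (k : Fin t) (i : ZMod n) :
    sig2 n s t (xv n s t k i) = yv n s t k (2 - i) := rfl
@[simp] lemma sig2_yv (k : Fin t) (i : ZMod n) :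
    sig2 n s t (yv n s t k i) = xv n s t k (2 - i) := rfl

lemma rho_zv (j : Fin s) (i : ZMod n) :
    rho n s t (zv n s t j i) = zv n s t j (i + 1) := by
  show sig2 n s t (sig1 n s t (zv n s t j i)) = _
  rw [sig1_zv, sig2_zv]
  congr 1
  ring
lemma rho_xv (k : Fin t) (i : ZMod n) :
    rho n s t (xv n s t k i) = xv n s t k (i + 1) := by
  show sig2 n s t (sig1 n s t (xv n s t k i)) = _
  rw [sig1_xv, sig2_yv]
  congr 1
  ring
lemma rho_yv (k : Fin t) (i : ZMod n) :
    rho n s t (yv n s t k i) = yv n s t k (i + 1) := by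
  show sig2 n s t (sig1 n s t (yv n s t k i)) = _
  rw [sig1_yv, sig2_xv]
  congr 1
  ring

section invol

variable {σ : Vrt n s t → Vrt n s t}

lemma ev_sig (hσ : ∀ v, σ (σ v) = v) (a v : Vrt n s t) :
    ev (σ a) v = ev a (σ v) := by
  unfold ev
  by_cases h : v = σ a
  · rw [if_pos h, if_pos (by rw [h, hσ])]
  · rw [if_neg h, if_neg (fun hc => h (by rw [← hc, hσ]))]

lemma even_pair (hσ : ∀ v, σ (σ v) = v) {v : Vrt n s t} (hv : σ v = v) (a : Vrt n s t) :
    Even (ev a v + ev (σ a) v) := by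
  rcases eq_or_ne v a with rfl | h
  · rw [hv]
    simp [ev]
  · have h2 : v ≠ σ a := by
      intro hc
      apply h
      have h3 := congrArg σ hc
      rw [hσ, hv] at h3
      exact h3
    simp [ev, h, h2]

lemma pair_conds (hσ : ∀ v, σ (σ v) = v) (a b : Vrt n s t) :
    (∑ v, (ev a + ev (σ a) - ev b - ev (σ b)) v = 0) ∧
      (∀ v, (ev a + ev (σ a) - ev b - ev (σ b)) (σ v)
          = (ev a + ev (σ a) - ev b - ev (σ b)) v) ∧
      ∀ v, σ v = v → Even ((ev a + ev (σ a) - ev b - ev (σ b)) v) := by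
  refine ⟨?_, ?_, ?_⟩
  · simp only [Pi.sub_apply, Pi.add_apply, Finset.sum_add_distrib, Finset.sum_sub_distrib,
      sum_ev]
    norm_num
  · intro v
    simp only [Pi.sub_apply, Pi.add_apply]
    rw [← ev_sig hσ a v, ← ev_sig hσ b v, ← ev_sig hσ (σ a) v, ← ev_sig hσ (σ b) v,
      hσ a, hσ b]
    ring
  · intro v hv
    have heq : (ev a + ev (σ a) - ev b - ev (σ b)) v
        = (ev a v + ev (σ a) v) - (ev b v + ev (σ b) v) := by
      simp only [Pi.sub_apply, Pi.add_apply]; ring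
    rw [heq]
    exact (even_pair hσ hv a).sub (even_pair hσ hv b)

end invol

lemma mem_Pgp1_pair (a b : Vrt n s t) :
    ev a + ev (sig1 n s t a) - ev b - ev (sig1 n s t b) ∈ Pgp1 n s t :=
  pair_conds sig1_invol a b

lemma mem_Pgp2_pair (a b : Vrt n s t) :
    ev a + ev (sig2 n s t a) - ev b - ev (sig2 n s t b) ∈ Pgp2 n s t :=
  pair_conds sig2_invol a b

def famZ (j : Fin s) : Vrt n s t → ℤ := fun v =>
  match v with
  | Sum.inl (j', _) => if j' = j then 1 else 0
  | _ => 0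

def famX (k : Fin t) : Vrt n s t → ℤ := fun v =>
  match v with
  | Sum.inr (Sum.inl (k', _)) => if k' = k then 1 else 0
  | _ => 0

def famY (k : Fin t) : Vrt n s t → ℤ := fun v =>
  match v with
  | Sum.inr (Sum.inr (k', _)) => if k' = k then 1 else 0
  | _ => 0

/-- family indicator as sum of vertex indicators -/
lemma famZ_eq (j : Fin s) : famZ (n := n) (t := t) j = ∑ i : ZMod n, ev (zv n s t j i) := by
  funext v
  rw [Finset.sum_apply]
  rcases v with ⟨j', i'⟩ | ⟨k', i'⟩ | ⟨k', i'⟩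
  · simp only [famZ, ev, zv, Sum.inl.injEq, Prod.mk.injEq]
    rcases eq_or_ne j' j with rfl | h
    · simp [Finset.sum_ite_eq]
    · simp [h]
  · simp [famZ, ev, zv]
  · simp [famZ, ev, zv]

lemma famY_eq (k : Fin t) : famY (n := n) (s := s) k = ∑ i : ZMod n, ev (yv n s t k i) := by
  funext v
  rw [Finset.sum_apply]
  rcases v with ⟨j', i'⟩ | ⟨k', i'⟩ | ⟨k', i'⟩
  · simp [famY, ev, yv]
  · simp [famY, ev, yv]
  · simp only [famY, ev, yv, Sum.inr.injEq, Sum.inl.injEq, Prod.mk.injEq]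
    rcases eq_or_ne k' k with rfl | h
    · simp [Finset.sum_ite_eq]
    · simp [h]

lemma famX_eq (k : Fin t) : famX (n := n) (s := s) k = ∑ i : ZMod n, ev (xv n s t k i) := by
  funext v
  rw [Finset.sum_apply]
  rcases v with ⟨j', i'⟩ | ⟨k', i'⟩ | ⟨k', i'⟩
  · simp [famX, ev, xv]
  · simp only [famX, ev, xv, Sum.inr.injEq, Sum.inl.injEq, Prod.mk.injEq]
    rcases eq_or_ne k' k with rfl | h
    · simp [Finset.sum_ite_eq]
    · simp [h]
  · simp [famX, ev, xv]

lemma sum_famZ (j : Fin s) : ∑ v, famZ (n := n) (t := t) j v = n := by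
  rw [famZ_eq]
  simp only [Finset.sum_apply]
  rw [Finset.sum_comm]
  simp only [sum_ev]
  simp [Finset.card_univ, ZMod.card]

lemma sum_famX (k : Fin t) : ∑ v, famX (n := n) (s := s) k v = n := by
  rw [famX_eq]
  simp only [Finset.sum_apply]
  rw [Finset.sum_comm]
  simp only [sum_ev]
  simp [Finset.card_univ, ZMod.card]

lemma sum_famY (k : Fin t) : ∑ v, famY (n := n) (s := s) k v = n := by
  rw [famY_eq]
  simp only [Finset.sum_apply]
  rw [Finset.sum_comm]
  simp only [sum_ev]
  simp [Finset.card_univ, ZMod.card]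

lemma famZ_rho (j : Fin s) (v : Vrt n s t) : famZ j (rho n s t v) = famZ j v := by
  rcases v with ⟨j', i⟩ | ⟨k, i⟩ | ⟨k, i⟩ <;> rfl

lemma famX_rho (k : Fin t) (v : Vrt n s t) : famX k (rho n s t v) = famX k v := by
  rcases v with ⟨j', i⟩ | ⟨k', i⟩ | ⟨k', i⟩ <;> rfl

lemma famY_rho (k : Fin t) (v : Vrt n s t) : famY k (rho n s t v) = famY k v := by
  rcases v with ⟨j', i⟩ | ⟨k', i⟩ | ⟨k', i⟩ <;> rfl

lemma mem_Pgp3_ZZ (j j' : Fin s) : famZ (n := n) (t := t) j - famZ j' ∈ Pgp3 n s t :=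
  ⟨by simp only [Pi.sub_apply, Finset.sum_sub_distrib, sum_famZ]; ring, fun v => by
    simp [Pi.sub_apply, famZ_rho]⟩

lemma mem_Pgp3_YZ (k : Fin t) (j' : Fin s) : famY (n := n) k - famZ j' ∈ Pgp3 n s t :=
  ⟨by simp only [Pi.sub_apply, Finset.sum_sub_distrib, sum_famY, sum_famZ]; ring, fun v => by
    simp [Pi.sub_apply, famY_rho, famZ_rho]⟩

lemma mem_Pgp3_XZ (k : Fin t) (j' : Fin s) : famX (n := n) k - famZ j' ∈ Pgp3 n s t :=
  ⟨by simp only [Pi.sub_apply, Finset.sum_sub_distrib, sum_famX, sum_famZ]; ring, fun v => by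
    simp [Pi.sub_apply, famX_rho, famZ_rho]⟩

variable (n s t) in
abbrev Pall : AddSubgroup (Vrt n s t → ℤ) := Pgp1 n s t ⊔ Pgp2 n s t ⊔ Pgp3 n s t

lemma mem1 {x : Vrt n s t → ℤ} (h : x ∈ Pgp1 n s t) : x ∈ Pall n s t :=
  (le_sup_left.trans le_sup_left : Pgp1 n s t ≤ Pall n s t) h

lemma mem2 {x : Vrt n s t → ℤ} (h : x ∈ Pgp2 n s t) : x ∈ Pall n s t :=
  (le_sup_right.trans le_sup_left : Pgp2 n s t ≤ Pall n s t) h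

lemma mem3 {x : Vrt n s t → ℤ} (h : x ∈ Pgp3 n s t) : x ∈ Pall n s t :=
  (le_sup_right : Pgp3 n s t ≤ Pall n s t) h


variable (n s t) in
def Df (j0 : Fin s) : Vrt n s t → ℤ := ev (zv n s t j0 2) - ev (zv n s t j0 1)
variable (n s t) in
def Vf (j0 : Fin s) (k : Fin t) : Vrt n s t → ℤ := ev (yv n s t k 0) - ev (zv n s t j0 0)
variable (n s t) in
def Wf (j0 j : Fin s) : Vrt n s t → ℤ := ev (zv n s t j 0) - ev (zv n s t j0 0)

lemma L_zstep (j0 j : Fin s) (i : ZMod n) :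
    ev (zv n s t j (i + 1)) - ev (zv n s t j i) - Df n s t j0 ∈ Pall n s t := by
  have h1 := mem1 (mem_Pgp1_pair (zv n s t j (1 - i)) (zv n s t j0 0))
  have h2 := mem2 (mem_Pgp2_pair (zv n s t j (1 - i)) (zv n s t j0 0))
  rw [sig1_zv, sig1_zv] at h1
  rw [sig2_zv, sig2_zv] at h2
  have e1 : (1 : ZMod n) - (1 - i) = i := by ring
  have e2 : (2 : ZMod n) - (1 - i) = i + 1 := by ring
  have e3 : (1 : ZMod n) - 0 = 1 := by ring
  have e4 : (2 : ZMod n) - 0 = 2 := by ring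
  rw [e1, e3] at h1
  rw [e2, e4] at h2
  have hm := AddSubgroup.sub_mem _ h2 h1
  convert hm using 1
  funext u
  simp only [Df, Pi.add_apply, Pi.sub_apply]
  ring

lemma L_ystep (j0 : Fin s) (k : Fin t) (i : ZMod n) :
    ev (yv n s t k (i + 1)) - ev (yv n s t k i) - Df n s t j0 ∈ Pall n s t := by
  have h1 := mem1 (mem_Pgp1_pair (xv n s t k (1 - i)) (zv n s t j0 0))
  have h2 := mem2 (mem_Pgp2_pair (xv n s t k (1 - i)) (zv n s t j0 0))
  rw [sig1_xv, sig1_zv] at h1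
  rw [sig2_xv, sig2_zv] at h2
  have e1 : (1 : ZMod n) - (1 - i) = i := by ring
  have e2 : (2 : ZMod n) - (1 - i) = i + 1 := by ring
  have e3 : (1 : ZMod n) - 0 = 1 := by ring
  have e4 : (2 : ZMod n) - 0 = 2 := by ring
  rw [e1, e3] at h1
  rw [e2, e4] at h2
  have hm := AddSubgroup.sub_mem _ h2 h1
  convert hm using 1
  funext u
  simp only [Df, Pi.add_apply, Pi.sub_apply]
  ring

lemma L_xpair (j0 : Fin s) (k : Fin t) (i : ZMod n) :
    ev (xv n s t k i) + ev (yv n s t k (1 - i)) - ev (zv n s t j0 0) - ev (zv n s t j0 1)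
      ∈ Pall n s t := by
  have h1 := mem1 (mem_Pgp1_pair (xv n s t k i) (zv n s t j0 0))
  rw [sig1_xv, sig1_zv] at h1
  have e3 : (1 : ZMod n) - 0 = 1 := by ring
  rwa [e3] at h1

lemma L_zdouble (j0 j : Fin s) :
    ev (zv n s t j 1) + ev (zv n s t j 1) - ev (zv n s t j0 0) - ev (zv n s t j0 2)
      ∈ Pall n s t := by
  have h1 := mem2 (mem_Pgp2_pair (zv n s t j 1) (zv n s t j0 0))
  rw [sig2_zv, sig2_zv] at h1
  have e1 : (2 : ZMod n) - 1 = 1 := by ring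
  have e4 : (2 : ZMod n) - 0 = 2 := by ring
  rwa [e1, e4] at h1

lemma T_z (j0 j : Fin s) (u : ℕ) :
    ev (zv n s t j (u : ZMod n)) - ev (zv n s t j 0) - (u : ℤ) • Df n s t j0
      ∈ Pall n s t := by
  induction u with
  | zero => simpa using zero_mem (Pall n s t)
  | succ u ih =>
    have hstep := L_zstep (t := t) j0 j (u : ZMod n)
    have hm := AddSubgroup.add_mem _ hstep ih
    have ecast : ((u + 1 : ℕ) : ZMod n) = (u : ZMod n) + 1 := by push_cast; ring
    rw [ecast]
    convert hm using 1
    funext w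
    simp only [Df, Pi.add_apply, Pi.sub_apply, Pi.smul_apply, smul_eq_mul]
    push_cast
    ring

lemma T_y (j0 : Fin s) (k : Fin t) (u : ℕ) :
    ev (yv n s t k (u : ZMod n)) - ev (yv n s t k 0) - (u : ℤ) • Df n s t j0
      ∈ Pall n s t := by
  induction u with
  | zero => simpa using zero_mem (Pall n s t)
  | succ u ih =>
    have hstep := L_ystep (s := s) j0 k (u : ZMod n)
    have hm := AddSubgroup.add_mem _ hstep ih
    have ecast : ((u + 1 : ℕ) : ZMod n) = (u : ZMod n) + 1 := by push_cast; ring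
    rw [ecast]
    convert hm using 1
    funext w
    simp only [Df, Pi.add_apply, Pi.sub_apply, Pi.smul_apply, smul_eq_mul]
    push_cast
    ring

lemma red_z (j0 j : Fin s) (i : ZMod n) :
    ev (zv n s t j i) - ev (zv n s t j 0) - ((i.val : ℤ)) • Df n s t j0 ∈ Pall n s t := by
  simpa using T_z (n := n) (t := t) j0 j i.val

lemma red_y (j0 : Fin s) (k : Fin t) (i : ZMod n) :
    ev (yv n s t k i) - ev (yv n s t k 0) - ((i.val : ℤ)) • Df n s t j0 ∈ Pall n s t := by
  simpa using T_y (n := n) (s := s) j0 k i.val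

variable (n s t) in
def Span (j0 : Fin s) : AddSubgroup (Vrt n s t → ℤ) where
  carrier := {g | ∃ (c : ℤ) (a : Fin t → ℤ) (b : Fin s → ℤ),
    g = c • Df n s t j0 + (∑ k, a k • Vf n s t j0 k) + ∑ j, b j • Wf n s t j0 j}
  zero_mem' := ⟨0, 0, 0, by simp⟩
  add_mem' := by
    rintro g g' ⟨c, a, b, rfl⟩ ⟨c', a', b', rfl⟩
    refine ⟨c + c', a + a', b + b', ?_⟩
    simp only [Pi.add_apply, add_smul, Finset.sum_add_distrib]
    abel
  neg_mem' := by
    rintro g ⟨c, a, b, rfl⟩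
    refine ⟨-c, -a, -b, ?_⟩
    simp only [Pi.neg_apply, neg_smul, Finset.sum_neg_distrib]
    abel

lemma D_mem (j0 : Fin s) : Df n s t j0 ∈ Span n s t j0 :=
  ⟨1, 0, 0, by simp⟩

lemma V_mem (j0 : Fin s) (k : Fin t) : Vf n s t j0 k ∈ Span n s t j0 := by
  refine ⟨0, fun k' => if k' = k then 1 else 0, 0, ?_⟩
  simp [ite_smul, Finset.sum_ite_eq']

lemma W_mem (j0 j : Fin s) : Wf n s t j0 j ∈ Span n s t j0 := by
  refine ⟨0, 0, fun j' => if j' = j then 1 else 0, ?_⟩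
  simp [ite_smul, Finset.sum_ite_eq']

lemma claimA (j0 : Fin s) (v : Vrt n s t) :
    ev v - ev (zv n s t j0 0) ∈ Pall n s t ⊔ Span n s t j0 := by
  have hPle : Pall n s t ≤ Pall n s t ⊔ Span n s t j0 := le_sup_left
  have hSle : Span n s t j0 ≤ Pall n s t ⊔ Span n s t j0 := le_sup_right
  rcases v with ⟨j, i⟩ | ⟨k, i⟩ | ⟨k, i⟩
  · show ev (zv n s t j i) - ev (zv n s t j0 0) ∈ _
    have h1 := hPle (red_z j0 j i)
    have h2 : ((i.val : ℤ)) • Df n s t j0 + Wf n s t j0 j ∈ Pall n s t ⊔ Span n s t j0 :=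
      hSle (add_mem (zsmul_mem (D_mem j0) _) (W_mem j0 j))
    have hm := add_mem h1 h2
    convert hm using 1
    funext u
    simp only [Wf, Pi.add_apply, Pi.sub_apply, Pi.smul_apply, smul_eq_mul]
    ring
  · show ev (xv n s t k i) - ev (zv n s t j0 0) ∈ _
    have h1 := hPle (L_xpair j0 k i)
    have h2 := hPle (red_y j0 k (1 - i))
    have h3 : ev (zv n s t j0 (1 : ZMod n)) - ev (zv n s t j0 0) - (1 : ℤ) • Df n s t j0
        ∈ Pall n s t ⊔ Span n s t j0 := by
      exact hPle (by simpa using T_z (n := n) (t := t) j0 j0 1)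
    have h4 : (1 - (((1 - i).val : ℤ))) • Df n s t j0 - Vf n s t j0 k
        ∈ Pall n s t ⊔ Span n s t j0 :=
      hSle (sub_mem (zsmul_mem (D_mem j0) _) (V_mem j0 k))
    have hm := add_mem (add_mem (sub_mem h1 h2) h3) h4
    convert hm using 1
    funext u
    simp only [Vf, Df, Pi.add_apply, Pi.sub_apply, Pi.smul_apply, smul_eq_mul]
    ring
  · show ev (yv n s t k i) - ev (zv n s t j0 0) ∈ _
    have h1 := hPle (red_y j0 k i)
    have h2 : ((i.val : ℤ)) • Df n s t j0 + Vf n s t j0 k ∈ Pall n s t ⊔ Span n s t j0 :=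
      hSle (add_mem (zsmul_mem (D_mem j0) _) (V_mem j0 k))
    have hm := add_mem h1 h2
    convert hm using 1
    funext u
    simp only [Vf, Pi.add_apply, Pi.sub_apply, Pi.smul_apply, smul_eq_mul]
    ring

lemma span_total (j0 : Fin s) {δ : Vrt n s t → ℤ} (hδ : ∑ v, δ v = 0) :
    δ ∈ Pall n s t ⊔ Span n s t j0 := by
  have hrep : δ = ∑ v, δ v • (ev v - ev (zv n s t j0 0)) := by
    funext u
    rw [Finset.sum_apply]
    have hterm : ∀ v : Vrt n s t, (δ v • (ev v - ev (zv n s t j0 0))) u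
        = δ v * ev v u - δ v * ev (zv n s t j0 0) u := by
      intro v
      simp only [Pi.sub_apply, Pi.smul_apply, smul_eq_mul]
      ring
    simp only [hterm]
    rw [Finset.sum_sub_distrib]
    have e1 : ∑ v, δ v * ev v u = δ u := by
      simp only [ev, mul_ite, mul_one, mul_zero]
      rw [Finset.sum_ite_eq]
      simp
    have e2 : ∑ v, δ v * ev (zv n s t j0 0) u = 0 := by
      rw [← Finset.sum_mul, hδ, zero_mul]
    rw [e1, e2, sub_zero]
  rw [hrep]
  exact sum_mem (fun v _ => zsmul_mem (claimA j0 v) _)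

lemma nD_mem (j0 : Fin s) : (n : ℤ) • Df n s t j0 ∈ Pall n s t := by
  have h := T_z (n := n) (t := t) j0 j0 n
  rw [ZMod.natCast_self] at h
  have hm := neg_mem h
  convert hm using 1
  funext u
  simp only [Pi.neg_apply, Pi.sub_apply, Pi.smul_apply, smul_eq_mul]
  ring

lemma nV_mem (j0 : Fin s) (k : Fin t) : (n : ℤ) • Vf n s t j0 k ∈ Pall n s t := by
  have hsum : ∑ i : ZMod n,
      ((ev (yv n s t k i) - ev (yv n s t k 0) - ((i.val : ℤ)) • Df n s t j0)
        - (ev (zv n s t j0 i) - ev (zv n s t j0 0) - ((i.val : ℤ)) • Df n s t j0))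
      ∈ Pall n s t :=
    sum_mem (fun i _ => sub_mem (red_y j0 k i) (red_z j0 j0 i))
  have hfam := mem3 (mem_Pgp3_YZ (n := n) (s := s) k j0)
  have heq : (n : ℤ) • Vf n s t j0 k
      = (famY k - famZ j0) - ∑ i : ZMod n,
      ((ev (yv n s t k i) - ev (yv n s t k 0) - ((i.val : ℤ)) • Df n s t j0)
        - (ev (zv n s t j0 i) - ev (zv n s t j0 0) - ((i.val : ℤ)) • Df n s t j0)) := by
    simp only [sub_sub_sub_cancel_right]
    rw [famY_eq, famZ_eq, Finset.sum_sub_distrib, Finset.sum_sub_distrib,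
      Finset.sum_sub_distrib, Finset.sum_const, Finset.sum_const, Finset.card_univ, ZMod.card]
    simp only [Vf, natCast_zsmul]
    module
  rw [heq]
  exact sub_mem hfam hsum

lemma W2_mem (j0 j : Fin s) : (2 : ℤ) • Wf n s t j0 j ∈ Pall n s t := by
  have h1 := L_zdouble (n := n) (t := t) j0 j
  have h2 := L_zdouble (n := n) (t := t) j0 j0
  have h3 : ev (zv n s t j (1 : ZMod n)) - ev (zv n s t j 0) - (1 : ℤ) • Df n s t j0
      ∈ Pall n s t := by
    simpa using T_z (n := n) (t := t) j0 j 1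
  have h4 : ev (zv n s t j0 (1 : ZMod n)) - ev (zv n s t j0 0) - (1 : ℤ) • Df n s t j0
      ∈ Pall n s t := by
    simpa using T_z (n := n) (t := t) j0 j0 1
  have hm := add_mem (sub_mem (sub_mem h1 h2) (zsmul_mem h3 2)) (zsmul_mem h4 2)
  convert hm using 1
  funext u
  simp only [Wf, Df, Pi.add_apply, Pi.sub_apply, Pi.smul_apply, smul_eq_mul]
  ring

/-! ### The invariant homomorphisms -/

variable (n s t) in
def F0f (δ : Vrt n s t → ℤ) : ZMod n := ∑ v, idx n s t v * ((δ v : ℤ) : ZMod n)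

variable (n s t) in
def Ghf (k : Fin t) (δ : Vrt n s t → ℤ) : ZMod n :=
  ∑ i : ZMod n, (((δ (yv n s t k i) : ℤ) : ZMod n) - ((δ (xv n s t k i) : ℤ) : ZMod n))

variable (n s t) in
def Hhf (j : Fin s) (δ : Vrt n s t → ℤ) : ZMod 2 :=
  ∑ i : ZMod n, ((δ (zv n s t j i) : ℤ) : ZMod 2)

lemma F0f_add (δ δ' : Vrt n s t → ℤ) : F0f n s t (δ + δ') = F0f n s t δ + F0f n s t δ' := by
  unfold F0f
  rw [← Finset.sum_add_distrib]
  apply Finset.sum_congr rfl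
  intro v _
  simp only [Pi.add_apply]
  push_cast
  ring

lemma Ghf_add (k : Fin t) (δ δ' : Vrt n s t → ℤ) :
    Ghf n s t k (δ + δ') = Ghf n s t k δ + Ghf n s t k δ' := by
  unfold Ghf
  rw [← Finset.sum_add_distrib]
  apply Finset.sum_congr rfl
  intro i _
  simp only [Pi.add_apply]
  push_cast
  ring

lemma Hhf_add (j : Fin s) (δ δ' : Vrt n s t → ℤ) :
    Hhf n s t j (δ + δ') = Hhf n s t j δ + Hhf n s t j δ' := by
  unfold Hhf
  rw [← Finset.sum_add_distrib]
  apply Finset.sum_congr rfl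
  intro i _
  simp only [Pi.add_apply]
  push_cast
  ring

/-! ### Generic helpers -/

lemma sum_sigma_reindex {M : Type*} [AddCommMonoid M] {σ : Vrt n s t → Vrt n s t}
    (hσ : ∀ v, σ (σ v) = v) (f : Vrt n s t → M) : ∑ v, f (σ v) = ∑ v, f v :=
  Fintype.sum_bijective σ (Function.Involutive.bijective hσ) _ _ (fun _ => rfl)

lemma sum_reflect {M : Type*} [AddCommMonoid M] (c : ZMod n) (f : ZMod n → M) :
    ∑ i : ZMod n, f (c - i) = ∑ i, f i :=
  Fintype.sum_bijective (fun i : ZMod n => c - i)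
    (Function.Involutive.bijective (fun i => sub_sub_cancel c i)) _ _ (fun _ => rfl)

lemma chi_cancel {c : ℤ} {χ : Vrt n s t → ℤ} {σ : Vrt n s t → Vrt n s t}
    (hσ : ∀ v, σ (σ v) = v) (hpair : ∀ v, χ v + χ (σ v) = c) {δ : Vrt n s t → ℤ}
    (hinv : ∀ v, δ (σ v) = δ v) (h0 : ∑ v, δ v = 0) :
    ∑ v, χ v * δ v = 0 := by
  have hre : ∑ v, χ (σ v) * δ v = ∑ v, χ v * δ v := by
    calc ∑ v, χ (σ v) * δ v = ∑ v, χ (σ v) * δ (σ v) := by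
          apply Finset.sum_congr rfl
          intro v _
          rw [hinv v]
      _ = ∑ v, χ v * δ v := sum_sigma_reindex hσ (fun v => χ v * δ v)
  have h2 : (∑ v, χ v * δ v) + (∑ v, χ v * δ v) = c * ∑ v, δ v := by
    nth_rewrite 2 [← hre]
    rw [← Finset.sum_add_distrib, Finset.mul_sum]
    apply Finset.sum_congr rfl
    intro v _
    rw [← add_mul, hpair v]
  rw [h0, mul_zero] at h2
  omega

/-! ### Fixed-point facts (n even) -/

lemma no_half (heven : Even n) (i : ZMod n) : 1 - i ≠ i := by
  intro h
  obtain ⟨m, hm⟩ := heven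
  have hdvd : (2 : ℕ) ∣ n := ⟨m, by omega⟩
  have h2 : (1 : ZMod n) = i + i := by linear_combination h
  have h3 := congrArg (ZMod.castHom hdvd (ZMod 2)) h2
  rw [map_add, map_one] at h3
  rw [CharTwo.add_self_eq_zero] at h3
  exact one_ne_zero h3

lemma sig1_ne (heven : Even n) (v : Vrt n s t) : sig1 n s t v ≠ v := by
  rcases v with ⟨j, i⟩ | ⟨k, i⟩ | ⟨k, i⟩
  · intro h
    have h' : zv n s t j (1 - i) = zv n s t j i := h
    have h2 := congrArg (idx n s t) h'
    exact no_half heven i h2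
  · simp [sig1]
  · simp [sig1]

lemma u2zero (heven : Even n) (u : ZMod n) (h : u + u = 0) : u.val = 0 ∨ u.val = n / 2 := by
  have hval : (u.val + u.val) % n = 0 := by
    rw [← ZMod.val_add, h, ZMod.val_zero]
  have hdvd : n ∣ u.val + u.val := Nat.dvd_of_mod_eq_zero hval
  obtain ⟨q, hq⟩ := hdvd
  have hlt : u.val < n := ZMod.val_lt u
  have hq2 : q ≤ 1 := by
    by_contra h'
    push_neg at h'
    have h2q : 2 ≤ q := h'
    have := Nat.mul_le_mul_left n h2q
    rw [← hq] at this
    omega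
  obtain ⟨m, hm⟩ := heven
  interval_cases q <;> omega

/-! ### The chi functions -/

variable (n s t) in
def chi1 : Vrt n s t → ℤ := fun v =>
  match v with
  | Sum.inl (_, i) => ((i.val % 2 : ℕ) : ℤ)
  | Sum.inr (Sum.inl _) => 0
  | Sum.inr (Sum.inr _) => 1

variable (n s t) in
def chi2 : Vrt n s t → ℤ := fun v =>
  match v with
  | Sum.inl (_, i) =>
      if (i - 1).val = 0 ∨ (i - 1).val = n / 2 then 1
      else if (i - 1).val < n / 2 then 0 else 2
  | Sum.inr (Sum.inl _) => 0
  | Sum.inr (Sum.inr _) => 2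

lemma chi1_pair (hn : 3 ≤ n) (heven : Even n) (v : Vrt n s t) :
    chi1 n s t v + chi1 n s t (sig1 n s t v) = 1 := by
  obtain ⟨m, hm⟩ := heven
  rcases v with ⟨j, i⟩ | ⟨k, i⟩ | ⟨k, i⟩
  · show ((i.val % 2 : ℕ) : ℤ) + (((1 - i).val % 2 : ℕ) : ℤ) = 1
    have hfact : Fact (1 < n) := ⟨by omega⟩
    have hv : (i.val + (1 - i).val) % n = 1 := by
      rw [← ZMod.val_add, show i + (1 - i) = 1 from by ring, ZMod.val_one]
    have h1 : i.val < n := ZMod.val_lt i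
    have h2 : (1 - i).val < n := ZMod.val_lt _
    have key : i.val + (1 - i).val = 1 ∨ i.val + (1 - i).val = n + 1 := by
      rcases Nat.lt_or_ge (i.val + (1 - i).val) n with h | h
      · left; rwa [Nat.mod_eq_of_lt h] at hv
      · right
        have h6 : (i.val + (1 - i).val) % n = (i.val + (1 - i).val - n) % n :=
          Nat.mod_eq_sub_mod h
        rw [h6, Nat.mod_eq_of_lt (by omega)] at hv
        omega
    push_cast
    omega
  · show (0 : ℤ) + 1 = 1
    norm_num
  · show (1 : ℤ) + 0 = 1
    norm_num

lemma chi2_z (j : Fin s) (i : ZMod n) : chi2 n s t (zv n s t j i)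
    = if (i - 1).val = 0 ∨ (i - 1).val = n / 2 then 1
      else if (i - 1).val < n / 2 then 0 else 2 := rfl

lemma chi2_pair (heven : Even n) (v : Vrt n s t) :
    chi2 n s t v + chi2 n s t (sig2 n s t v) = 2 := by
  obtain ⟨m, hm⟩ := heven
  have hn2 : n ≠ 0 := NeZero.ne n
  rcases v with ⟨j, i⟩ | ⟨k, i⟩ | ⟨k, i⟩
  · show chi2 n s t (zv n s t j i) + chi2 n s t (zv n s t j (2 - i)) = 2
    rw [chi2_z, chi2_z, show (2 : ZMod n) - i - 1 = -(i - 1) from by ring]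
    set u := i - 1 with hu
    by_cases h0 : u.val = 0
    · have hu0 : u = 0 := (ZMod.val_eq_zero u).mp h0
      rw [hu0]
      norm_num
    · have hneg : (-u).val = n - u.val := by
        rw [ZMod.neg_val, if_neg (fun hc => h0 (by rw [hc, ZMod.val_zero]))]
      have hlt : u.val < n := ZMod.val_lt u
      by_cases hhalf : u.val = n / 2
      · have hval : (-u).val = n / 2 := by omega
        rw [if_pos (Or.inr hhalf), if_pos (Or.inr hval)]
        norm_num
      · have hval0 : (-u).val ≠ 0 := by omega
        have hvalh : (-u).val ≠ n / 2 := by omega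
        have hA : ¬(u.val = 0 ∨ u.val = n / 2) := by push_neg; exact ⟨h0, hhalf⟩
        have hB : ¬((-u).val = 0 ∨ (-u).val = n / 2) := by push_neg; exact ⟨hval0, hvalh⟩
        rw [if_neg hA, if_neg hB]
        rcases Nat.lt_or_ge u.val (n / 2) with h | h
        · have hB2 : ¬((-u).val < n / 2) := by omega
          rw [if_pos h, if_neg hB2]
          norm_num
        · have hA2 : ¬(u.val < n / 2) := by omega
          have hB2 : (-u).val < n / 2 := by omega
          rw [if_neg hA2, if_pos hB2]
          norm_num
  · show (0 : ℤ) + 2 = 2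
    norm_num
  · show (2 : ℤ) + 0 = 2
    norm_num

/-! ### Vanishing of F0 -/

lemma F0f_vanish1 (hn : 3 ≤ n) (heven : Even n) {δ : Vrt n s t → ℤ}
    (hδ : δ ∈ Pgp1 n s t) : F0f n s t δ = 0 := by
  obtain ⟨h0, h1, -⟩ := hδ
  have hchi : ∑ v, chi1 n s t v * δ v = 0 :=
    chi_cancel sig1_invol (chi1_pair hn heven) h1 h0
  have hinvv : ∑ v, ((idx n s t v - ((chi1 n s t v : ℤ) : ZMod n)) * ((δ v : ℤ) : ZMod n))
      = 0 := by
    apply Finset.sum_ninvolution (sig1 n s t)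
    · intro v
      have hp := chi1_pair (t := t) (s := s) hn heven v
      have hpz : ((chi1 n s t v : ℤ) : ZMod n) + ((chi1 n s t (sig1 n s t v) : ℤ) : ZMod n)
          = 1 := by
        have := congrArg (fun x : ℤ => ((x : ZMod n))) hp
        push_cast at this ⊢
        exact this
      rw [h1 v, idx_sig1]
      linear_combination (-((δ v : ℤ) : ZMod n)) * hpz
    · intro v _
      exact sig1_ne heven v
    · intro v
      exact Finset.mem_univ _
    · exact sig1_invol
  have hsplit : F0f n s t δ
      = ∑ v, ((idx n s t v - ((chi1 n s t v : ℤ) : ZMod n)) * ((δ v : ℤ) : ZMod n))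
        + ((∑ v, chi1 n s t v * δ v : ℤ) : ZMod n) := by
    unfold F0f
    push_cast
    rw [← Finset.sum_add_distrib]
    apply Finset.sum_congr rfl
    intro v _
    ring
  rw [hsplit, hinvv, hchi]
  norm_num

lemma F0f_vanish2 (heven : Even n) {δ : Vrt n s t → ℤ}
    (hδ : δ ∈ Pgp2 n s t) : F0f n s t δ = 0 := by
  obtain ⟨h0, h1, h2⟩ := hδ
  have hchi : ∑ v, chi2 n s t v * δ v = 0 :=
    chi_cancel sig2_invol (chi2_pair heven) h1 h0
  have hinvv : ∑ v, ((idx n s t v - ((chi2 n s t v : ℤ) : ZMod n)) * ((δ v : ℤ) : ZMod n))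
      = 0 := by
    apply Finset.sum_ninvolution (sig2 n s t)
    · intro v
      have hp := chi2_pair (t := t) (s := s) heven v
      have hpz : ((chi2 n s t v : ℤ) : ZMod n) + ((chi2 n s t (sig2 n s t v) : ℤ) : ZMod n)
          = 2 := by
        have := congrArg (fun x : ℤ => ((x : ZMod n))) hp
        push_cast at this ⊢
        exact this
      rw [h1 v, idx_sig2]
      linear_combination (-((δ v : ℤ) : ZMod n)) * hpz
    · intro v hf
      intro hfix
      apply hf
      rcases v with ⟨j, i⟩ | ⟨k, i⟩ | ⟨k, i⟩
      · have hfix' : (2 : ZMod n) - i = i := by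
          have h3 : zv n s t j (2 - i) = zv n s t j i := hfix
          exact congrArg (idx n s t) h3
        have huu : (i - 1) + (i - 1) = 0 := by linear_combination -hfix'
        have hval := u2zero heven _ huu
        have hchiv : chi2 n s t (Sum.inl (j, i)) = 1 := by
          rw [show (Sum.inl (j, i) : Vrt n s t) = zv n s t j i from rfl, chi2_z,
            if_pos hval]
        have heve : Even (δ (Sum.inl (j, i))) := h2 _ hfix
        obtain ⟨d, hd⟩ := heve
        rw [hchiv, hd]
        show (idx n s t (zv n s t j i) - ((1 : ℤ) : ZMod n)) * (((d + d : ℤ)) : ZMod n) = 0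
        have hidx : idx n s t (zv n s t j i) = i := rfl
        rw [hidx]
        push_cast
        linear_combination ((d : ℤ) : ZMod n) * huu
      · exact absurd hfix (by simp [sig2])
      · exact absurd hfix (by simp [sig2])
    · intro v
      exact Finset.mem_univ _
    · exact sig2_invol
  have hsplit : F0f n s t δ
      = ∑ v, ((idx n s t v - ((chi2 n s t v : ℤ) : ZMod n)) * ((δ v : ℤ) : ZMod n))
        + ((∑ v, chi2 n s t v * δ v : ℤ) : ZMod n) := by
    unfold F0f
    push_cast
    rw [← Finset.sum_add_distrib]
    apply Finset.sum_congr rfl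
    intro v _
    ring
  rw [hsplit, hinvv, hchi]
  norm_num

/-! ### rho-invariance gives constancy along families -/

lemma rho_const_z {δ : Vrt n s t → ℤ} (h : ∀ v, δ (rho n s t v) = δ v) (j : Fin s)
    (i : ZMod n) : δ (zv n s t j i) = δ (zv n s t j 0) := by
  have key : ∀ u : ℕ, δ (zv n s t j (u : ZMod n)) = δ (zv n s t j 0) := by
    intro u
    induction u with
    | zero => norm_num
    | succ u ih =>
      rw [show ((u + 1 : ℕ) : ZMod n) = (u : ZMod n) + 1 from by push_cast; ring, ← rho_zv,
        h]
      exact ih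
  have h2 := key i.val
  rwa [ZMod.natCast_val, ZMod.cast_id] at h2

lemma rho_const_x {δ : Vrt n s t → ℤ} (h : ∀ v, δ (rho n s t v) = δ v) (k : Fin t)
    (i : ZMod n) : δ (xv n s t k i) = δ (xv n s t k 0) := by
  have key : ∀ u : ℕ, δ (xv n s t k (u : ZMod n)) = δ (xv n s t k 0) := by
    intro u
    induction u with
    | zero => norm_num
    | succ u ih =>
      rw [show ((u + 1 : ℕ) : ZMod n) = (u : ZMod n) + 1 from by push_cast; ring, ← rho_xv,
        h]
      exact ih
  have h2 := key i.val
  rwa [ZMod.natCast_val, ZMod.cast_id] at h2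

lemma rho_const_y {δ : Vrt n s t → ℤ} (h : ∀ v, δ (rho n s t v) = δ v) (k : Fin t)
    (i : ZMod n) : δ (yv n s t k i) = δ (yv n s t k 0) := by
  have key : ∀ u : ℕ, δ (yv n s t k (u : ZMod n)) = δ (yv n s t k 0) := by
    intro u
    induction u with
    | zero => norm_num
    | succ u ih =>
      rw [show ((u + 1 : ℕ) : ZMod n) = (u : ZMod n) + 1 from by push_cast; ring, ← rho_yv,
        h]
      exact ih
  have h2 := key i.val
  rwa [ZMod.natCast_val, ZMod.cast_id] at h2

lemma F0f_vanish3 {δ : Vrt n s t → ℤ} (hδ : δ ∈ Pgp3 n s t) : F0f n s t δ = 0 := by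
  obtain ⟨h0, h1⟩ := hδ
  have hcz : ∀ (j : Fin s) (i : ZMod n), δ (Sum.inl (j, i)) = δ (zv n s t j 0) :=
    fun j i => rho_const_z h1 j i
  have hcx : ∀ (k : Fin t) (i : ZMod n), δ (Sum.inr (Sum.inl (k, i))) = δ (xv n s t k 0) :=
    fun k i => rho_const_x h1 k i
  have hcy : ∀ (k : Fin t) (i : ZMod n), δ (Sum.inr (Sum.inr (k, i))) = δ (yv n s t k 0) :=
    fun k i => rho_const_y h1 k i
  have hS : (∑ j : Fin s, δ (zv n s t j 0))
      + ((∑ k : Fin t, δ (xv n s t k 0)) + (∑ k : Fin t, δ (yv n s t k 0))) = 0 := by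
    have h0' := h0
    rw [Fintype.sum_sum_type, Fintype.sum_sum_type, Fintype.sum_prod_type,
      Fintype.sum_prod_type, Fintype.sum_prod_type] at h0'
    have e1 : ∀ j : Fin s, ∑ i : ZMod n, δ (Sum.inl (j, i)) = (n : ℤ) * δ (zv n s t j 0) := by
      intro j
      calc ∑ i : ZMod n, δ (Sum.inl (j, i)) = ∑ _i : ZMod n, δ (zv n s t j 0) :=
            Finset.sum_congr rfl (fun i _ => hcz j i)
        _ = (n : ℤ) * δ (zv n s t j 0) := by
            rw [Finset.sum_const, Finset.card_univ, ZMod.card, nsmul_eq_mul]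
    have e2 : ∀ k : Fin t, ∑ i : ZMod n, δ (Sum.inr (Sum.inl (k, i)))
        = (n : ℤ) * δ (xv n s t k 0) := by
      intro k
      calc ∑ i : ZMod n, δ (Sum.inr (Sum.inl (k, i))) = ∑ _i : ZMod n, δ (xv n s t k 0) :=
            Finset.sum_congr rfl (fun i _ => hcx k i)
        _ = (n : ℤ) * δ (xv n s t k 0) := by
            rw [Finset.sum_const, Finset.card_univ, ZMod.card, nsmul_eq_mul]
    have e3 : ∀ k : Fin t, ∑ i : ZMod n, δ (Sum.inr (Sum.inr (k, i)))
        = (n : ℤ) * δ (yv n s t k 0) := by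
      intro k
      calc ∑ i : ZMod n, δ (Sum.inr (Sum.inr (k, i))) = ∑ _i : ZMod n, δ (yv n s t k 0) :=
            Finset.sum_congr rfl (fun i _ => hcy k i)
        _ = (n : ℤ) * δ (yv n s t k 0) := by
            rw [Finset.sum_const, Finset.card_univ, ZMod.card, nsmul_eq_mul]
    rw [Finset.sum_congr rfl (fun j _ => e1 j), Finset.sum_congr rfl (fun k _ => e2 k),
      Finset.sum_congr rfl (fun k _ => e3 k), ← Finset.mul_sum, ← Finset.mul_sum,
      ← Finset.mul_sum, ← mul_add, ← mul_add] at h0'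
    have hne : (n : ℤ) ≠ 0 := Int.natCast_ne_zero.mpr (NeZero.ne n)
    exact (mul_eq_zero.mp h0').resolve_left hne
  unfold F0f
  rw [Fintype.sum_sum_type, Fintype.sum_sum_type, Fintype.sum_prod_type,
    Fintype.sum_prod_type, Fintype.sum_prod_type]
  have f1 : ∀ j : Fin s, ∑ i : ZMod n,
      idx n s t (Sum.inl (j, i)) * ((δ (Sum.inl (j, i)) : ℤ) : ZMod n)
      = (∑ i : ZMod n, i) * ((δ (zv n s t j 0) : ℤ) : ZMod n) := by
    intro j
    rw [Finset.sum_mul]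
    apply Finset.sum_congr rfl
    intro i _
    rw [hcz j i]
    rfl
  have f2 : ∀ k : Fin t, ∑ i : ZMod n,
      idx n s t (Sum.inr (Sum.inl (k, i))) * ((δ (Sum.inr (Sum.inl (k, i))) : ℤ) : ZMod n)
      = (∑ i : ZMod n, i) * ((δ (xv n s t k 0) : ℤ) : ZMod n) := by
    intro k
    rw [Finset.sum_mul]
    apply Finset.sum_congr rfl
    intro i _
    rw [hcx k i]
    rfl
  have f3 : ∀ k : Fin t, ∑ i : ZMod n,
      idx n s t (Sum.inr (Sum.inr (k, i))) * ((δ (Sum.inr (Sum.inr (k, i))) : ℤ) : ZMod n)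
      = (∑ i : ZMod n, i) * ((δ (yv n s t k 0) : ℤ) : ZMod n) := by
    intro k
    rw [Finset.sum_mul]
    apply Finset.sum_congr rfl
    intro i _
    rw [hcy k i]
    rfl
  rw [Finset.sum_congr rfl (fun j _ => f1 j), Finset.sum_congr rfl (fun k _ => f2 k),
    Finset.sum_congr rfl (fun k _ => f3 k), ← Finset.mul_sum, ← Finset.mul_sum,
    ← Finset.mul_sum, ← mul_add, ← mul_add]
  have hcast : ((∑ j : Fin s, δ (zv n s t j 0))
      + ((∑ k : Fin t, δ (xv n s t k 0)) + (∑ k : Fin t, δ (yv n s t k 0))) : ℤ)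
      = (0 : ℤ) := hS
  have : (∑ j : Fin s, ((δ (zv n s t j 0) : ℤ) : ZMod n))
      + ((∑ k : Fin t, ((δ (xv n s t k 0) : ℤ) : ZMod n))
        + (∑ k : Fin t, ((δ (yv n s t k 0) : ℤ) : ZMod n))) = 0 := by
    have h4 := congrArg (fun x : ℤ => ((x : ZMod n))) hcast
    push_cast at h4
    convert h4 using 2 <;> norm_num
  rw [this, mul_zero]

/-! ### Vanishing of G -/

lemma Ghf_vanish1 {δ : Vrt n s t → ℤ} (hδ : δ ∈ Pgp1 n s t) (k : Fin t) :
    Ghf n s t k δ = 0 := by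
  obtain ⟨-, h1, -⟩ := hδ
  unfold Ghf
  rw [Finset.sum_sub_distrib]
  have e : ∑ i : ZMod n, ((δ (xv n s t k i) : ℤ) : ZMod n)
      = ∑ i : ZMod n, ((δ (yv n s t k i) : ℤ) : ZMod n) := by
    have hx : ∀ i : ZMod n, δ (xv n s t k i) = δ (yv n s t k (1 - i)) :=
      fun i => (h1 (xv n s t k i)).symm
    calc ∑ i : ZMod n, ((δ (xv n s t k i) : ℤ) : ZMod n)
        = ∑ i : ZMod n, ((δ (yv n s t k (1 - i)) : ℤ) : ZMod n) :=
          Finset.sum_congr rfl (fun i _ => by rw [hx i])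
      _ = ∑ i : ZMod n, ((δ (yv n s t k i) : ℤ) : ZMod n) :=
          sum_reflect 1 (fun u => ((δ (yv n s t k u) : ℤ) : ZMod n))
  rw [e, sub_self]

lemma Ghf_vanish2 {δ : Vrt n s t → ℤ} (hδ : δ ∈ Pgp2 n s t) (k : Fin t) :
    Ghf n s t k δ = 0 := by
  obtain ⟨-, h1, -⟩ := hδ
  unfold Ghf
  rw [Finset.sum_sub_distrib]
  have e : ∑ i : ZMod n, ((δ (xv n s t k i) : ℤ) : ZMod n)
      = ∑ i : ZMod n, ((δ (yv n s t k i) : ℤ) : ZMod n) := by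
    have hx : ∀ i : ZMod n, δ (xv n s t k i) = δ (yv n s t k (2 - i)) :=
      fun i => (h1 (xv n s t k i)).symm
    calc ∑ i : ZMod n, ((δ (xv n s t k i) : ℤ) : ZMod n)
        = ∑ i : ZMod n, ((δ (yv n s t k (2 - i)) : ℤ) : ZMod n) :=
          Finset.sum_congr rfl (fun i _ => by rw [hx i])
      _ = ∑ i : ZMod n, ((δ (yv n s t k i) : ℤ) : ZMod n) :=
          sum_reflect 2 (fun u => ((δ (yv n s t k u) : ℤ) : ZMod n))
  rw [e, sub_self]

lemma Ghf_vanish3 {δ : Vrt n s t → ℤ} (hδ : δ ∈ Pgp3 n s t) (k : Fin t) :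
    Ghf n s t k δ = 0 := by
  obtain ⟨-, h1⟩ := hδ
  unfold Ghf
  calc ∑ i : ZMod n, (((δ (yv n s t k i) : ℤ) : ZMod n) - ((δ (xv n s t k i) : ℤ) : ZMod n))
      = ∑ _i : ZMod n, (((δ (yv n s t k 0) : ℤ) : ZMod n) - ((δ (xv n s t k 0) : ℤ) : ZMod n))
        := Finset.sum_congr rfl (fun i _ => by rw [rho_const_y h1 k i, rho_const_x h1 k i])
    _ = 0 := by
        rw [Finset.sum_const, Finset.card_univ, ZMod.card, nsmul_eq_mul, ZMod.natCast_self,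
          zero_mul]

/-! ### Vanishing of H -/

lemma Hhf_vanish1 (heven : Even n) {δ : Vrt n s t → ℤ} (hδ : δ ∈ Pgp1 n s t) (j : Fin s) :
    Hhf n s t j δ = 0 := by
  obtain ⟨-, h1, -⟩ := hδ
  unfold Hhf
  apply Finset.sum_ninvolution (fun i : ZMod n => 1 - i)
  · intro i
    have hx : δ (zv n s t j (1 - i)) = δ (zv n s t j i) := h1 (zv n s t j i)
    rw [hx]
    exact CharTwo.add_self_eq_zero _
  · intro i _
    exact no_half heven i
  · intro i
    exact Finset.mem_univ _
  · intro i
    exact sub_sub_cancel 1 i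

lemma Hhf_vanish2 {δ : Vrt n s t → ℤ} (hδ : δ ∈ Pgp2 n s t) (j : Fin s) :
    Hhf n s t j δ = 0 := by
  obtain ⟨-, h1, h2⟩ := hδ
  unfold Hhf
  apply Finset.sum_ninvolution (fun i : ZMod n => 2 - i)
  · intro i
    have hx : δ (zv n s t j (2 - i)) = δ (zv n s t j i) := h1 (zv n s t j i)
    rw [hx]
    exact CharTwo.add_self_eq_zero _
  · intro i hf heq
    apply hf
    have hfix : sig2 n s t (zv n s t j i) = zv n s t j i := by rw [sig2_zv, heq]
    obtain ⟨d, hd⟩ := h2 _ hfix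
    rw [hd]
    push_cast
    exact CharTwo.add_self_eq_zero _
  · intro i
    exact Finset.mem_univ _
  · intro i
    exact sub_sub_cancel 2 i

lemma Hhf_vanish3 (heven : Even n) {δ : Vrt n s t → ℤ} (hδ : δ ∈ Pgp3 n s t) (j : Fin s) :
    Hhf n s t j δ = 0 := by
  obtain ⟨-, h1⟩ := hδ
  unfold Hhf
  calc ∑ i : ZMod n, ((δ (zv n s t j i) : ℤ) : ZMod 2)
      = ∑ _i : ZMod n, ((δ (zv n s t j 0) : ℤ) : ZMod 2) :=
        Finset.sum_congr rfl (fun i _ => by rw [rho_const_z h1 j i])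
    _ = 0 := by
        have hz : ((n : ℕ) : ZMod 2) = 0 :=
          (ZMod.natCast_eq_zero_iff n 2).mpr heven.two_dvd
        rw [Finset.sum_const, Finset.card_univ, ZMod.card, nsmul_eq_mul, hz, zero_mul]

/-! ### subtraction rules -/

lemma F0f_sub (δ δ' : Vrt n s t → ℤ) : F0f n s t (δ - δ') = F0f n s t δ - F0f n s t δ' := by
  unfold F0f
  rw [← Finset.sum_sub_distrib]
  apply Finset.sum_congr rfl
  intro v _
  simp only [Pi.sub_apply]
  push_cast
  ring

lemma Ghf_sub (k : Fin t) (δ δ' : Vrt n s t → ℤ) :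
    Ghf n s t k (δ - δ') = Ghf n s t k δ - Ghf n s t k δ' := by
  unfold Ghf
  rw [← Finset.sum_sub_distrib]
  apply Finset.sum_congr rfl
  intro i _
  simp only [Pi.sub_apply]
  push_cast
  ring

lemma Hhf_sub (j : Fin s) (δ δ' : Vrt n s t → ℤ) :
    Hhf n s t j (δ - δ') = Hhf n s t j δ - Hhf n s t j δ' := by
  unfold Hhf
  rw [← Finset.sum_sub_distrib]
  apply Finset.sum_congr rfl
  intro i _
  simp only [Pi.sub_apply]
  push_cast
  ring

/-! ### values on indicator divisors -/

lemma F0f_ev (a : Vrt n s t) : F0f n s t (ev a) = idx n s t a := by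
  unfold F0f ev
  have h : ∀ v : Vrt n s t,
      idx n s t v * (((if v = a then (1 : ℤ) else 0) : ℤ) : ZMod n)
        = if v = a then idx n s t v else 0 := by
    intro v
    split_ifs <;> simp
  simp only [h]
  rw [Finset.sum_ite_eq']
  simp

lemma Ghf_ev_z (m : Fin t) (j : Fin s) (i : ZMod n) :
    Ghf n s t m (ev (zv n s t j i)) = 0 := by
  unfold Ghf ev
  simp [yv, xv, zv]

lemma Ghf_ev_y (m k : Fin t) (i : ZMod n) :
    Ghf n s t m (ev (yv n s t k i)) = if m = k then 1 else 0 := by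
  unfold Ghf ev
  rcases eq_or_ne m k with rfl | h
  · rw [if_pos rfl]
    have h1 : ∀ i' : ZMod n,
        (((if yv n s t m i' = yv n s t m i then (1 : ℤ) else 0) : ℤ) : ZMod n)
          - (((if xv n s t m i' = yv n s t m i then (1 : ℤ) else 0) : ℤ) : ZMod n)
        = if i' = i then 1 else 0 := by
      intro i'
      have hx0 : ¬(xv n s t m i' = yv n s t m i) := by simp [xv, yv]
      rw [if_neg hx0]
      by_cases hii : i' = i
      · have hyy : yv n s t m i' = yv n s t m i := by rw [hii]
        rw [if_pos hyy, if_pos hii]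
        norm_num
      · have hyy : ¬(yv n s t m i' = yv n s t m i) := by simp [yv, hii]
        rw [if_neg hyy, if_neg hii]
        norm_num
    simp only [h1]
    rw [Finset.sum_ite_eq']
    simp
  · rw [if_neg h]
    have h1 : ∀ i' : ZMod n,
        (((if yv n s t m i' = yv n s t k i then (1 : ℤ) else 0) : ℤ) : ZMod n)
          - (((if xv n s t m i' = yv n s t k i then (1 : ℤ) else 0) : ℤ) : ZMod n)
        = 0 := by
      intro i'
      have hy0 : ¬(yv n s t m i' = yv n s t k i) := by simp [yv, h]
      have hx0 : ¬(xv n s t m i' = yv n s t k i) := by simp [xv, yv]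
      rw [if_neg hy0, if_neg hx0]
      norm_num
    simp only [h1]
    simp

lemma Ghf_ev_x (m k : Fin t) (i : ZMod n) :
    Ghf n s t m (ev (xv n s t k i)) = if m = k then -1 else 0 := by
  unfold Ghf ev
  rcases eq_or_ne m k with rfl | h
  · rw [if_pos rfl]
    have h1 : ∀ i' : ZMod n,
        (((if yv n s t m i' = xv n s t m i then (1 : ℤ) else 0) : ℤ) : ZMod n)
          - (((if xv n s t m i' = xv n s t m i then (1 : ℤ) else 0) : ℤ) : ZMod n)
        = if i' = i then -1 else 0 := by
      intro i'
      have hy0 : ¬(yv n s t m i' = xv n s t m i) := by simp [xv, yv]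
      rw [if_neg hy0]
      by_cases hii : i' = i
      · have hxx : xv n s t m i' = xv n s t m i := by rw [hii]
        rw [if_pos hxx, if_pos hii]
        norm_num
      · have hxx : ¬(xv n s t m i' = xv n s t m i) := by simp [xv, hii]
        rw [if_neg hxx, if_neg hii]
        norm_num
    simp only [h1]
    rw [Finset.sum_ite_eq']
    simp
  · rw [if_neg h]
    have h1 : ∀ i' : ZMod n,
        (((if yv n s t m i' = xv n s t k i then (1 : ℤ) else 0) : ℤ) : ZMod n)
          - (((if xv n s t m i' = xv n s t k i then (1 : ℤ) else 0) : ℤ) : ZMod n)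
        = 0 := by
      intro i'
      have hy0 : ¬(yv n s t m i' = xv n s t k i) := by simp [xv, yv]
      have hx0 : ¬(xv n s t m i' = xv n s t k i) := by simp [xv, h]
      rw [if_neg hy0, if_neg hx0]
      norm_num
    simp only [h1]
    simp

lemma Hhf_ev_z (j' j : Fin s) (i : ZMod n) :
    Hhf n s t j' (ev (zv n s t j i)) = if j' = j then 1 else 0 := by
  unfold Hhf ev
  rcases eq_or_ne j' j with rfl | h
  · rw [if_pos rfl]
    have h1 : ∀ i' : ZMod n,
        (((if zv n s t j' i' = zv n s t j' i then (1 : ℤ) else 0) : ℤ) : ZMod 2)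
        = if i' = i then 1 else 0 := by
      intro i'
      by_cases hii : i' = i
      · have hzz : zv n s t j' i' = zv n s t j' i := by rw [hii]
        rw [if_pos hzz, if_pos hii]
        norm_num
      · have hzz : ¬(zv n s t j' i' = zv n s t j' i) := by simp [zv, hii]
        rw [if_neg hzz, if_neg hii]
        norm_num
    simp only [h1]
    rw [Finset.sum_ite_eq']
    simp
  · rw [if_neg h]
    have h1 : ∀ i' : ZMod n,
        (((if zv n s t j' i' = zv n s t j i then (1 : ℤ) else 0) : ℤ) : ZMod 2)
        = 0 := by
      intro i'
      have hz0 : ¬(zv n s t j' i' = zv n s t j i) := by simp [zv, h]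
      rw [if_neg hz0]
      norm_num
    simp only [h1]
    simp

lemma Hhf_ev_y (j' : Fin s) (k : Fin t) (i : ZMod n) :
    Hhf n s t j' (ev (yv n s t k i)) = 0 := by
  unfold Hhf ev
  simp [zv, yv]

lemma Hhf_ev_x (j' : Fin s) (k : Fin t) (i : ZMod n) :
    Hhf n s t j' (ev (xv n s t k i)) = 0 := by
  unfold Hhf ev
  simp [zv, xv]

/-! ### values on the generators -/

lemma F0f_D (j0 : Fin s) : F0f n s t (Df n s t j0) = 1 := by
  unfold Df
  rw [F0f_sub, F0f_ev, F0f_ev]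
  show (2 : ZMod n) - (1 : ZMod n) = 1
  ring

lemma F0f_V (j0 : Fin s) (k : Fin t) : F0f n s t (Vf n s t j0 k) = 0 := by
  unfold Vf
  rw [F0f_sub, F0f_ev, F0f_ev]
  show (0 : ZMod n) - (0 : ZMod n) = 0
  ring

lemma F0f_W (j0 j : Fin s) : F0f n s t (Wf n s t j0 j) = 0 := by
  unfold Wf
  rw [F0f_sub, F0f_ev, F0f_ev]
  show (0 : ZMod n) - (0 : ZMod n) = 0
  ring

lemma Ghf_D (m : Fin t) (j0 : Fin s) : Ghf n s t m (Df n s t j0) = 0 := by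
  unfold Df
  rw [Ghf_sub, Ghf_ev_z, Ghf_ev_z, sub_self]

lemma Ghf_V (m : Fin t) (j0 : Fin s) (k : Fin t) :
    Ghf n s t m (Vf n s t j0 k) = if m = k then 1 else 0 := by
  unfold Vf
  rw [Ghf_sub, Ghf_ev_y, Ghf_ev_z, sub_zero]

lemma Ghf_W (m : Fin t) (j0 j : Fin s) : Ghf n s t m (Wf n s t j0 j) = 0 := by
  unfold Wf
  rw [Ghf_sub, Ghf_ev_z, Ghf_ev_z, sub_self]

lemma Hhf_D (j' j0 : Fin s) : Hhf n s t j' (Df n s t j0) = 0 := by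
  unfold Df
  rw [Hhf_sub, Hhf_ev_z, Hhf_ev_z, sub_self]

lemma Hhf_V (j' j0 : Fin s) (k : Fin t) :
    Hhf n s t j' (Vf n s t j0 k) = -(if j' = j0 then 1 else 0) := by
  unfold Vf
  rw [Hhf_sub, Hhf_ev_y, Hhf_ev_z, zero_sub]

lemma Hhf_W (j' j0 j : Fin s) :
    Hhf n s t j' (Wf n s t j0 j) = (if j' = j then 1 else 0) - (if j' = j0 then 1 else 0) := by
  unfold Wf
  rw [Hhf_sub, Hhf_ev_z, Hhf_ev_z]

/-! ### bundled homomorphisms -/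

variable (n s t) in
def F0h : (Vrt n s t → ℤ) →+ ZMod n := AddMonoidHom.mk' (F0f n s t) F0f_add

variable (n s t) in
def Ghh (k : Fin t) : (Vrt n s t → ℤ) →+ ZMod n := AddMonoidHom.mk' (Ghf n s t k) (Ghf_add k)

variable (n s t) in
def Hhh (j : Fin s) : (Vrt n s t → ℤ) →+ ZMod 2 := AddMonoidHom.mk' (Hhf n s t j) (Hhf_add j)

@[simp] lemma F0h_apply (δ : Vrt n s t → ℤ) : F0h n s t δ = F0f n s t δ := rfl
@[simp] lemma Ghh_apply (k : Fin t) (δ : Vrt n s t → ℤ) : Ghh n s t k δ = Ghf n s t k δ := rfl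
@[simp] lemma Hhh_apply (j : Fin s) (δ : Vrt n s t → ℤ) : Hhh n s t j δ = Hhf n s t j δ := rfl

/-! ### vanishing on all of P -/

lemma F0f_vanishP (hn : 3 ≤ n) (heven : Even n) {δ : Vrt n s t → ℤ}
    (hδ : δ ∈ Pall n s t) : F0f n s t δ = 0 := by
  have hle : Pall n s t ≤ (F0h n s t).ker := by
    refine sup_le (sup_le ?_ ?_) ?_
    · intro x hx
      exact F0f_vanish1 hn heven hx
    · intro x hx
      exact F0f_vanish2 heven hx
    · intro x hx
      exact F0f_vanish3 hx
  exact hle hδ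

lemma Ghf_vanishP {δ : Vrt n s t → ℤ} (hδ : δ ∈ Pall n s t) (k : Fin t) :
    Ghf n s t k δ = 0 := by
  have hle : Pall n s t ≤ (Ghh n s t k).ker := by
    refine sup_le (sup_le ?_ ?_) ?_
    · intro x hx
      exact Ghf_vanish1 hx k
    · intro x hx
      exact Ghf_vanish2 hx k
    · intro x hx
      exact Ghf_vanish3 hx k
  exact hle hδ

lemma Hhf_vanishP (heven : Even n) {δ : Vrt n s t → ℤ} (hδ : δ ∈ Pall n s t) (j : Fin s) :
    Hhf n s t j δ = 0 := by
  have hle : Pall n s t ≤ (Hhh n s t j).ker := by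
    refine sup_le (sup_le ?_ ?_) ?_
    · intro x hx
      exact Hhf_vanish1 heven hx j
    · intro x hx
      exact Hhf_vanish2 hx j
    · intro x hx
      exact Hhf_vanish3 heven hx j
  exact hle hδ

/-! ### membership in DivD -/

lemma Df_DivD (j0 : Fin s) : Df n s t j0 ∈ DivD n s t := by
  show ∑ v, Df n s t j0 v = 0
  simp only [Df, Pi.sub_apply]
  rw [Finset.sum_sub_distrib, sum_ev, sum_ev, sub_self]

lemma Vf_DivD (j0 : Fin s) (k : Fin t) : Vf n s t j0 k ∈ DivD n s t := by
  show ∑ v, Vf n s t j0 k v = 0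
  simp only [Vf, Pi.sub_apply]
  rw [Finset.sum_sub_distrib, sum_ev, sum_ev, sub_self]

lemma Wf_DivD (j0 j : Fin s) : Wf n s t j0 j ∈ DivD n s t := by
  show ∑ v, Wf n s t j0 j v = 0
  simp only [Wf, Pi.sub_apply]
  rw [Finset.sum_sub_distrib, sum_ev, sum_ev, sub_self]

/-! ### the full invariant map -/

variable (n s t) in
def Phi1 : (Vrt n s t → ℤ) →+ (Fin (t + 1) → ZMod n) :=
  AddMonoidHom.mk' (fun δ r => Fin.cases (F0f n s t δ) (fun k => Ghf n s t k δ) r) (by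
    intro a b
    funext r
    refine Fin.cases ?_ (fun k => ?_) r
    · simp [F0f_add]
    · simp [Ghf_add])

variable (n s t) in
def Phi2 : (Vrt n s t → ℤ) →+ (Fin (s - 1) → ZMod 2) :=
  AddMonoidHom.mk' (fun δ r => Hhf n s t ⟨r.val + 1, by have := r.isLt; omega⟩ δ) (by
    intro a b
    funext r
    simp [Hhf_add])

variable (n s t) in
def PhiT : (Vrt n s t → ℤ) →+ ((Fin (t + 1) → ZMod n) × (Fin (s - 1) → ZMod 2)) :=
  (Phi1 n s t).prod (Phi2 n s t)

lemma PhiT_fst_zero (δ : Vrt n s t → ℤ) : (PhiT n s t δ).1 0 = F0f n s t δ := by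
  simp [PhiT, Phi1]

lemma PhiT_fst_succ (k : Fin t) (δ : Vrt n s t → ℤ) :
    (PhiT n s t δ).1 k.succ = Ghf n s t k δ := by
  simp [PhiT, Phi1]

lemma PhiT_snd (r : Fin (s - 1)) (δ : Vrt n s t → ℤ) :
    (PhiT n s t δ).2 r = Hhf n s t ⟨r.val + 1, by have := r.isLt; omega⟩ δ := by
  simp [PhiT, Phi2]

lemma PhiT_vanishP (hn : 3 ≤ n) (heven : Even n) {δ : Vrt n s t → ℤ}
    (hδ : δ ∈ Pall n s t) : PhiT n s t δ = 0 := by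
  refine Prod.ext ?_ ?_
  · funext r
    refine Fin.cases ?_ (fun k => ?_) r
    · rw [PhiT_fst_zero, F0f_vanishP hn heven hδ]
      rfl
    · rw [PhiT_fst_succ, Ghf_vanishP hδ k]
      rfl
  · funext r
    rw [PhiT_snd, Hhf_vanishP heven hδ _]
    rfl

end QDP
/-- **𝒟/𝒫 for n even, s ≥ 1.** -/
theorem quot_D_P_of_even (n s t : ℕ) [NeZero n] (hn : 3 ≤ n) (heven : Even n) (hs : 1 ≤ s) :
    Nonempty ((DivD n s t ⧸
        ((Pgp1 n s t ⊔ Pgp2 n s t ⊔ Pgp3 n s t).addSubgroupOf (DivD n s t))) ≃+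
      ((Fin (t + 1) → ZMod n) × (Fin (s - 1) → ZMod 2))) := by
  classical
  have hs' : 0 < s := hs
  let j0 : Fin s := ⟨0, hs'⟩
  have hker : ((Pgp1 n s t ⊔ Pgp2 n s t ⊔ Pgp3 n s t).addSubgroupOf (DivD n s t))
      = ((QDP.PhiT n s t).comp (DivD n s t).subtype).ker := by
    ext x
    rw [AddSubgroup.mem_addSubgroupOf, AddMonoidHom.mem_ker]
    have hΦ'x : (QDP.PhiT n s t).comp (DivD n s t).subtype x
        = QDP.PhiT n s t (x : Vrt n s t → ℤ) := rfl
    rw [hΦ'x]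
    constructor
    · intro hx
      exact QDP.PhiT_vanishP hn heven hx
    · intro hx
      have hsum : ∑ v, (x : Vrt n s t → ℤ) v = 0 := x.2
      have hspan := QDP.span_total j0 hsum
      rw [AddSubgroup.mem_sup] at hspan
      obtain ⟨p, hp, g, hg, hpg⟩ := hspan
      obtain ⟨c, a, b, rfl⟩ := hg
      have hΦp : QDP.PhiT n s t p = 0 := QDP.PhiT_vanishP hn heven hp
      have hΦg : QDP.PhiT n s t (c • QDP.Df n s t j0 + (∑ k, a k • QDP.Vf n s t j0 k)
          + ∑ j, b j • QDP.Wf n s t j0 j) = 0 := by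
        have h4 := congrArg (QDP.PhiT n s t) hpg
        rw [map_add, hΦp, zero_add] at h4
        rw [h4, hx]
      set gg := c • QDP.Df n s t j0 + (∑ k, a k • QDP.Vf n s t j0 k)
          + ∑ j, b j • QDP.Wf n s t j0 j with hgg
      have eF : QDP.F0f n s t gg = ((c : ℤ) : ZMod n) := by
        show QDP.F0h n s t gg = _
        rw [hgg, map_add, map_add, map_zsmul, map_sum, map_sum]
        simp only [map_zsmul, QDP.F0h_apply, QDP.F0f_D, QDP.F0f_V, QDP.F0f_W, smul_zero,
          Finset.sum_const_zero, add_zero]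
        rw [zsmul_eq_mul, mul_one]
      have eG : ∀ m : Fin t, QDP.Ghf n s t m gg = ((a m : ℤ) : ZMod n) := by
        intro m
        show QDP.Ghh n s t m gg = _
        rw [hgg, map_add, map_add, map_zsmul, map_sum, map_sum]
        simp only [map_zsmul, QDP.Ghh_apply, QDP.Ghf_D, QDP.Ghf_V, QDP.Ghf_W, smul_zero,
          Finset.sum_const_zero, add_zero, zero_add, smul_ite]
        rw [Finset.sum_ite_eq]
        simp [zsmul_eq_mul]
      have eH : ∀ j : Fin s, j ≠ j0 → QDP.Hhf n s t j gg = ((b j : ℤ) : ZMod 2) := by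
        intro j hne
        show QDP.Hhh n s t j gg = _
        rw [hgg, map_add, map_add, map_zsmul, map_sum, map_sum]
        simp only [map_zsmul, QDP.Hhh_apply, QDP.Hhf_D, QDP.Hhf_V, QDP.Hhf_W, smul_zero,
          Finset.sum_const_zero, add_zero, zero_add, if_neg hne, neg_zero, sub_zero, smul_ite]
        rw [Finset.sum_ite_eq]
        simp [zsmul_eq_mul]
      have hcD : (n : ℤ) ∣ c := by
        have h5 : QDP.F0f n s t gg = 0 := by
          rw [← QDP.PhiT_fst_zero, hΦg]
          rfl
        rw [eF] at h5
        exact (ZMod.intCast_zmod_eq_zero_iff_dvd c n).mp h5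
      have haD : ∀ m : Fin t, (n : ℤ) ∣ a m := by
        intro m
        have h5 : QDP.Ghf n s t m gg = 0 := by
          rw [← QDP.PhiT_fst_succ, hΦg]
          rfl
        rw [eG m] at h5
        exact (ZMod.intCast_zmod_eq_zero_iff_dvd (a m) n).mp h5
      have hbD : ∀ j : Fin s, j ≠ j0 → (2 : ℤ) ∣ b j := by
        intro j hne
        have hjv : j.val ≠ 0 := by
          intro hv
          exact hne (Fin.ext hv)
        have h5 : QDP.Hhf n s t ⟨(⟨j.val - 1, by omega⟩ : Fin (s - 1)).val + 1,
            by have := j.isLt; omega⟩ gg = 0 := by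
          rw [← QDP.PhiT_snd, hΦg]
          rfl
        have hj' : (⟨(⟨j.val - 1, by omega⟩ : Fin (s - 1)).val + 1,
            by have := j.isLt; omega⟩ : Fin s) = j := by
          apply Fin.ext
          simp only []
          omega
        rw [hj', eH j hne] at h5
        exact (ZMod.intCast_zmod_eq_zero_iff_dvd (b j) 2).mp h5
      have hggP : gg ∈ QDP.Pall n s t := by
        rw [hgg]
        refine add_mem (add_mem ?_ ?_) ?_
        · obtain ⟨c', rfl⟩ := hcD
          rw [mul_comm, ← smul_smul]
          exact AddSubgroup.zsmul_mem _ (QDP.nD_mem j0) c'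
        · refine sum_mem fun k _ => ?_
          obtain ⟨a', ha'⟩ := haD k
          rw [ha', mul_comm, ← smul_smul]
          exact AddSubgroup.zsmul_mem _ (QDP.nV_mem j0 k) a'
        · refine sum_mem fun j _ => ?_
          rcases eq_or_ne j j0 with heq | hne
          · rw [heq]
            have hW0 : QDP.Wf n s t j0 j0 = 0 := sub_self _
            rw [hW0, smul_zero]
            exact zero_mem _
          · obtain ⟨b', hb'⟩ := hbD j hne
            rw [hb', mul_comm, ← smul_smul]
            exact AddSubgroup.zsmul_mem _ (QDP.W2_mem j0 j) b'
      rw [← hpg]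
      exact add_mem hp hggP
  have hsurj : Function.Surjective ((QDP.PhiT n s t).comp (DivD n s t).subtype) := by
    rintro ⟨F, B⟩
    set ξ := ((F 0).val : ℤ) • QDP.Df n s t j0
        + (∑ k : Fin t, ((F k.succ).val : ℤ) • QDP.Vf n s t j0 k)
        + ∑ r : Fin (s - 1), ((B r).val : ℤ) •
            QDP.Wf n s t j0 ⟨r.val + 1, by have := r.isLt; omega⟩ with hξ
    have hξD : ξ ∈ DivD n s t := by
      rw [hξ]
      refine add_mem (add_mem ?_ ?_) ?_
      · exact AddSubgroup.zsmul_mem _ (QDP.Df_DivD j0) _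
      · exact sum_mem fun k _ => AddSubgroup.zsmul_mem _ (QDP.Vf_DivD j0 k) _
      · exact sum_mem fun r _ => AddSubgroup.zsmul_mem _ (QDP.Wf_DivD j0 _) _
    refine ⟨⟨ξ, hξD⟩, ?_⟩
    have happ : (QDP.PhiT n s t).comp (DivD n s t).subtype ⟨ξ, hξD⟩
        = QDP.PhiT n s t ξ := rfl
    rw [happ]
    have eF : QDP.F0f n s t ξ = F 0 := by
      show QDP.F0h n s t ξ = _
      rw [hξ, map_add, map_add, map_zsmul, map_sum, map_sum]
      simp only [map_zsmul, QDP.F0h_apply, QDP.F0f_D, QDP.F0f_V, QDP.F0f_W, smul_zero,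
        Finset.sum_const_zero, add_zero]
      rw [zsmul_eq_mul, mul_one]
      push_cast
      rw [ZMod.natCast_val, ZMod.cast_id]
    have eG : ∀ m : Fin t, QDP.Ghf n s t m ξ = F m.succ := by
      intro m
      show QDP.Ghh n s t m ξ = _
      rw [hξ, map_add, map_add, map_zsmul, map_sum, map_sum]
      simp only [map_zsmul, QDP.Ghh_apply, QDP.Ghf_D, QDP.Ghf_V, QDP.Ghf_W, smul_zero,
        Finset.sum_const_zero, add_zero, zero_add, smul_ite]
      rw [Finset.sum_ite_eq]
      simp [zsmul_eq_mul, ZMod.natCast_val, ZMod.cast_id]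
    have eH : ∀ r : Fin (s - 1),
        QDP.Hhf n s t ⟨r.val + 1, by have := r.isLt; omega⟩ ξ = B r := by
      intro r
      have hne : (⟨r.val + 1, by have := r.isLt; omega⟩ : Fin s) ≠ j0 := by
        intro hcon
        have := congrArg Fin.val hcon
        simp only [j0] at this
        omega
      show QDP.Hhh n s t _ ξ = _
      rw [hξ, map_add, map_add, map_zsmul, map_sum, map_sum]
      simp only [map_zsmul, QDP.Hhh_apply, QDP.Hhf_D, QDP.Hhf_V, QDP.Hhf_W, smul_zero,
        Finset.sum_const_zero, add_zero, zero_add, if_neg hne, neg_zero, sub_zero, smul_ite]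
      have hcond : ∀ r' : Fin (s - 1),
          ((⟨r.val + 1, by have := r.isLt; omega⟩ : Fin s)
            = ⟨r'.val + 1, by have := r'.isLt; omega⟩) = (r = r') := by
        intro r'
        apply propext
        constructor
        · intro h
          have := congrArg Fin.val h
          simp only [] at this
          exact Fin.ext (by omega)
        · intro h
          rw [h]
      simp only [hcond]
      rw [Finset.sum_ite_eq]
      simp [zsmul_eq_mul, ZMod.natCast_val, ZMod.cast_id]
    refine Prod.ext ?_ ?_
    · funext r
      refine Fin.cases ?_ (fun k => ?_) r
      · rw [QDP.PhiT_fst_zero]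
        exact eF
      · rw [QDP.PhiT_fst_succ]
        exact eG k
    · funext r
      rw [QDP.PhiT_snd]
      exact eH r
  exact ⟨(QuotientAddGroup.quotientAddEquivOfEq hker).trans
    (QuotientAddGroup.quotientKerEquivOfSurjective _ hsurj)⟩
end

section
/- A divisor δ ∈ 𝒟 lies in 𝒫₁ ∩ 𝒫₂ if and only if δ ∈ 𝒫₀, i.e. if and only if δ is constant on each D_n-orbit of V and δ(z_i^j) is even for all 1 ≤ j ≤ s and all i ∈ ℤ/nℤ. -/
open scoped BigOperators

private lemma zmod_const_aux {n : ℕ} [NeZero n] (f : ZMod n → ℤ)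
    (h : ∀ i, f (i + 1) = f i) : ∀ i₁ i₂ : ZMod n, f i₁ = f i₂ := by
  have key : ∀ k : ℕ, f (k : ZMod n) = f 0 := by
    intro k
    induction k with
    | zero => simp
    | succ k ih => push_cast; rw [h]; exact ih
  have : ∀ i : ZMod n, f i = f 0 := by
    intro i
    obtain ⟨k, rfl⟩ := ZMod.natCast_rightInverse.surjective i
    exact key k
  intro i₁ i₂; rw [this i₁, this i₂]

/-- **𝒫₁ ∩ 𝒫₂ = 𝒫₀.** -/
theorem mem_P1_inf_P2_iff (n s t : ℕ) [NeZero n] (hn : 3 ≤ n)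
    (δ : Vrt n s t → ℤ) (hδ : δ ∈ DivD n s t) :
    δ ∈ Pgp1 n s t ⊓ Pgp2 n s t ↔ δ ∈ Pgp0 n s t := by
  constructor
  · rintro ⟨⟨h0, h1, h1e⟩, ⟨-, h2, h2e⟩⟩
    have hz1 : ∀ (j : Fin s) (i : ZMod n),
        δ (zv n s t j (1 - i)) = δ (zv n s t j i) := fun j i => h1 (zv n s t j i)
    have hx1 : ∀ (j : Fin t) (i : ZMod n),
        δ (yv n s t j (1 - i)) = δ (xv n s t j i) := fun j i => h1 (xv n s t j i)
    have hy1 : ∀ (j : Fin t) (i : ZMod n),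
        δ (xv n s t j (1 - i)) = δ (yv n s t j i) := fun j i => h1 (yv n s t j i)
    have hz2 : ∀ (j : Fin s) (i : ZMod n),
        δ (zv n s t j (2 - i)) = δ (zv n s t j i) := fun j i => h2 (zv n s t j i)
    have hx2 : ∀ (j : Fin t) (i : ZMod n),
        δ (yv n s t j (2 - i)) = δ (xv n s t j i) := fun j i => h2 (xv n s t j i)
    have hy2 : ∀ (j : Fin t) (i : ZMod n),
        δ (xv n s t j (2 - i)) = δ (yv n s t j i) := fun j i => h2 (yv n s t j i)
    have e21 : ∀ i : ZMod n, (2 : ZMod n) - (1 - i) = i + 1 := fun i => by ring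
    have hzc : ∀ (j : Fin s) (i₁ i₂ : ZMod n),
        δ (zv n s t j i₁) = δ (zv n s t j i₂) := by
      intro j
      refine zmod_const_aux _ (fun i => ?_)
      have := hz2 j (1 - i)
      rw [e21] at this
      rw [this, hz1]
    have hxc : ∀ (j : Fin t) (i₁ i₂ : ZMod n),
        δ (xv n s t j i₁) = δ (xv n s t j i₂) := by
      intro j
      refine zmod_const_aux _ (fun i => ?_)
      have := hy2 j (1 - i)
      rw [e21] at this
      rw [this, hx1]
    have hxy : ∀ (j : Fin t) (i₁ i₂ : ZMod n),
        δ (xv n s t j i₁) = δ (yv n s t j i₂) := by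
      intro j i₁ i₂
      have h := hx1 j (1 - i₂)
      rw [sub_sub_cancel] at h
      rw [h]; exact hxc j i₁ (1 - i₂)
    have hev1 : ∀ j : Fin s, Even (δ (zv n s t j 1)) := by
      intro j
      refine h2e (zv n s t j 1) ?_
      show zv n s t j (2 - 1) = zv n s t j 1
      norm_num
    exact ⟨h0, hzc, hxc, hxy, fun j i => by rw [hzc j i 1]; exact hev1 j⟩
  · rintro ⟨h0, hzc, hxc, hxy, hev⟩
    have hyx : ∀ (j : Fin t) (i₁ i₂ : ZMod n),
        δ (yv n s t j i₁) = δ (xv n s t j i₂) := fun j i₁ i₂ => (hxy j i₂ i₁).symm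
    constructor
    · refine ⟨h0, ?_, ?_⟩
      · rintro (⟨j, i⟩ | ⟨j, i⟩ | ⟨j, i⟩)
        · exact hzc j (1 - i) i
        · exact hyx j (1 - i) i
        · exact hxy j (1 - i) i
      · rintro (⟨j, i⟩ | ⟨j, i⟩ | ⟨j, i⟩) hv
        · exact hev j i
        · exact absurd hv (by simp [sig1])
        · exact absurd hv (by simp [sig1])
    · refine ⟨h0, ?_, ?_⟩
      · rintro (⟨j, i⟩ | ⟨j, i⟩ | ⟨j, i⟩)
        · exact hzc j (2 - i) i
        · exact hyx j (2 - i) i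
        · exact hxy j (2 - i) i
      · rintro (⟨j, i⟩ | ⟨j, i⟩ | ⟨j, i⟩) hv
        · exact hev j i
        · exact absurd hv (by simp [sig2])
        · exact absurd hv (by simp [sig2])
end

section
/- A divisor γ ∈ 𝒟 lies in (𝒫₁ + 𝒫₂) ∩ 𝒫₃ if and only if γ is constant on each D_n-orbit of V and, for each 1 ≤ j ≤ s, the integer n·γ(z_i^j) is even (equivalently: if n is odd, the common value of γ on each z-orbit is even; if n is even, no parity condition is imposed). -/
open scoped BigOperators

section Aux
variable (n s t : ℕ) [NeZero n]

lemma aux_sig1_zv (j : Fin s) (i : ZMod n) : sig1 n s t (zv n s t j i) = zv n s t j (1 - i) := rfl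
lemma aux_sig1_xv (j : Fin t) (i : ZMod n) : sig1 n s t (xv n s t j i) = yv n s t j (1 - i) := rfl
lemma aux_sig1_yv (j : Fin t) (i : ZMod n) : sig1 n s t (yv n s t j i) = xv n s t j (1 - i) := rfl
lemma aux_sig2_zv (j : Fin s) (i : ZMod n) : sig2 n s t (zv n s t j i) = zv n s t j (2 - i) := rfl
lemma aux_sig2_xv (j : Fin t) (i : ZMod n) : sig2 n s t (xv n s t j i) = yv n s t j (2 - i) := rfl
lemma aux_sig2_yv (j : Fin t) (i : ZMod n) : sig2 n s t (yv n s t j i) = xv n s t j (2 - i) := rfl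

lemma aux_rho_zv (j : Fin s) (i : ZMod n) : rho n s t (zv n s t j i) = zv n s t j (i + 1) := by
  show zv n s t j (2 - (1 - i)) = zv n s t j (i + 1)
  congr 1; ring
lemma aux_rho_xv (j : Fin t) (i : ZMod n) : rho n s t (xv n s t j i) = xv n s t j (i + 1) := by
  show xv n s t j (2 - (1 - i)) = xv n s t j (i + 1)
  congr 1; ring
lemma aux_rho_yv (j : Fin t) (i : ZMod n) : rho n s t (yv n s t j i) = yv n s t j (i + 1) := by
  show yv n s t j (2 - (1 - i)) = yv n s t j (i + 1)
  congr 1; ring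
end Aux

lemma aux_const_of_step {n : ℕ} [NeZero n] (f : ZMod n → ℤ) (h : ∀ i, f (i + 1) = f i) :
    ∀ i₁ i₂, f i₁ = f i₂ := by
  have key : ∀ (k : ℕ) (i : ZMod n), f (i + k) = f i := by
    intro k
    induction k with
    | zero => simp
    | succ m ih =>
      intro i
      push_cast
      rw [← add_assoc, h, ih]
  intro i₁ i₂
  have e : i₂ + (((i₁ - i₂).val : ℕ) : ZMod n) = i₁ := by
    rw [ZMod.natCast_val, ZMod.cast_id]; ring
  calc f i₁ = f (i₂ + (((i₁ - i₂).val : ℕ) : ZMod n)) := by rw [e]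
    _ = f i₂ := key _ _

lemma aux_even_sum_invol {n : ℕ} [NeZero n] (c : ZMod n) (f : ZMod n → ℤ)
    (hf : ∀ i, f (c - i) = f i) (hfix : ∀ i, c - i = i → Even (f i)) :
    Even (∑ i, f i) := by
  rw [even_iff_two_dvd, show (2:ℤ) = ((2:ℕ):ℤ) by norm_num, ← ZMod.intCast_zmod_eq_zero_iff_dvd]
  push_cast
  refine Finset.sum_involution (fun i _ => c - i) ?_ ?_ (fun _ _ => Finset.mem_univ _) ?_
  · intro i _
    have : ((f (c - i) : ℤ) : ZMod 2) = ((f i : ℤ) : ZMod 2) := by rw [hf]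
    rw [this]
    exact CharTwo.add_self_eq_zero _
  · intro i _ hne heq
    apply hne
    rw [ZMod.intCast_zmod_eq_zero_iff_dvd]
    exact_mod_cast even_iff_two_dvd.mp (hfix i heq)
  · intro i _
    simp

lemma aux_sum_sub_reindex {n : ℕ} [NeZero n] (c : ZMod n) (g : ZMod n → ℤ) :
    ∑ i, g (c - i) = ∑ i, g i :=
  Fintype.sum_equiv (Equiv.subLeft c) _ _ (fun _ => rfl)

lemma aux_sum_const_orbit {n : ℕ} [NeZero n] (f : ZMod n → ℤ)
    (h : ∀ i₁ i₂, f i₁ = f i₂) (i : ZMod n) :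
    ∑ i', f i' = (n : ℤ) * f i := by
  rw [Finset.sum_congr rfl (fun i' _ => h i' i)]
  simp [Finset.card_univ, ZMod.card, mul_comm]

/-- **(𝒫₁ + 𝒫₂) ∩ 𝒫₃.** -/
theorem mem_P12_inf_P3_iff (n s t : ℕ) [NeZero n] (hn : 3 ≤ n)
    (γ : Vrt n s t → ℤ) (hγ : γ ∈ DivD n s t) :
    γ ∈ (Pgp1 n s t ⊔ Pgp2 n s t) ⊓ Pgp3 n s t ↔
      ((∀ j i₁ i₂, γ (zv n s t j i₁) = γ (zv n s t j i₂)) ∧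
       (∀ j i₁ i₂, γ (xv n s t j i₁) = γ (xv n s t j i₂)) ∧
       (∀ j i₁ i₂, γ (xv n s t j i₁) = γ (yv n s t j i₂)) ∧
       ∀ j i, Even ((n : ℤ) * γ (zv n s t j i))) := by
  have hsum : ∑ v, γ v = 0 := hγ
  constructor
  · rintro ⟨h12, h3⟩
    obtain ⟨-, hinv3⟩ : (∑ v, γ v = 0) ∧ ∀ v, γ (rho n s t v) = γ v := h3
    obtain ⟨a, ha, b, hb, hab⟩ := AddSubgroup.mem_sup.mp h12
    obtain ⟨ha0, ha1, ha2⟩ : (∑ v, a v = 0) ∧ (∀ v, a (sig1 n s t v) = a v) ∧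
        (∀ v, sig1 n s t v = v → Even (a v)) := ha
    obtain ⟨hb0, hb1, hb2⟩ : (∑ v, b v = 0) ∧ (∀ v, b (sig2 n s t v) = b v) ∧
        (∀ v, sig2 n s t v = v → Even (b v)) := hb
    have hz : ∀ j i₁ i₂, γ (zv n s t j i₁) = γ (zv n s t j i₂) := fun j =>
      aux_const_of_step _ (fun i => by rw [← aux_rho_zv]; exact hinv3 _)
    have hx : ∀ j i₁ i₂, γ (xv n s t j i₁) = γ (xv n s t j i₂) := fun j =>
      aux_const_of_step _ (fun i => by rw [← aux_rho_xv]; exact hinv3 _)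
    have hy : ∀ j i₁ i₂, γ (yv n s t j i₁) = γ (yv n s t j i₂) := fun j =>
      aux_const_of_step _ (fun i => by rw [← aux_rho_yv]; exact hinv3 _)
    have hgab : ∀ v, γ v = a v + b v := fun v => by rw [← hab]; rfl
    have hn0 : (n : ℤ) ≠ 0 := by exact_mod_cast (NeZero.ne n)
    have hxy0 : ∀ j : Fin t, γ (xv n s t j 0) = γ (yv n s t j 0) := by
      intro j
      have key : ∑ i, γ (xv n s t j i) = ∑ i, γ (yv n s t j i) := by
        calc ∑ i, γ (xv n s t j i)
            = ∑ i, (a (yv n s t j (1 - i)) + b (yv n s t j (2 - i))) := by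
              refine Finset.sum_congr rfl (fun i _ => ?_)
              rw [hgab]
              exact congrArg₂ (· + ·) (ha1 (xv n s t j i)).symm (hb1 (xv n s t j i)).symm
          _ = (∑ i, a (yv n s t j (1 - i))) + ∑ i, b (yv n s t j (2 - i)) :=
              Finset.sum_add_distrib
          _ = (∑ i, a (yv n s t j i)) + ∑ i, b (yv n s t j i) := by
              rw [aux_sum_sub_reindex 1 (fun i => a (yv n s t j i)),
                aux_sum_sub_reindex 2 (fun i => b (yv n s t j i))]
          _ = ∑ i, γ (yv n s t j i) := by
              rw [← Finset.sum_add_distrib]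
              exact Finset.sum_congr rfl (fun i _ => (hgab _).symm)
      rw [aux_sum_const_orbit _ (hx j) 0, aux_sum_const_orbit _ (hy j) 0] at key
      exact mul_left_cancel₀ hn0 key
    refine ⟨hz, hx, fun j i₁ i₂ => (hx j i₁ 0).trans ((hxy0 j).trans (hy j 0 i₂)), ?_⟩
    intro j i
    rw [← aux_sum_const_orbit _ (hz j) i,
      Finset.sum_congr rfl (fun i' _ => hgab (zv n s t j i')), Finset.sum_add_distrib]
    refine (aux_even_sum_invol 1 _ (fun i' => ha1 (zv n s t j i')) ?_).add
      (aux_even_sum_invol 2 _ (fun i' => hb1 (zv n s t j i')) ?_)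
    · intro i' hfx
      exact ha2 (zv n s t j i') (show zv n s t j (1 - i') = zv n s t j i' by rw [hfx])
    · intro i' hfx
      exact hb2 (zv n s t j i') (show zv n s t j (2 - i') = zv n s t j i' by rw [hfx])
  · rintro ⟨h1, h2, h3, h4⟩
    constructor
    · rcases Nat.even_or_odd n with hne | hno
      · apply AddSubgroup.mem_sup_left
        refine ⟨hsum, ?_, ?_⟩
        · rintro (⟨j, i⟩ | ⟨j, i⟩ | ⟨j, i⟩)
          · exact h1 j (1 - i) i
          · exact (h3 j i (1 - i)).symm
          · exact h3 j (1 - i) i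
        · rintro (⟨j, i⟩ | ⟨j, i⟩ | ⟨j, i⟩) hv
          · have hv' : (1 : ZMod n) - i = i := by
              simpa [sig1, zv] using hv
            have h2n : 2 ∣ n := hne.two_dvd
            have hc := congrArg (ZMod.castHom h2n (ZMod 2)) hv'
            rw [map_sub, map_one] at hc
            have : ∀ c : ZMod 2, 1 - c ≠ c := by decide
            exact absurd hc (this _)
          · exact absurd hv (by simp [sig1])
          · exact absurd hv (by simp [sig1])
      · apply AddSubgroup.mem_sup_right
        refine ⟨hsum, ?_, ?_⟩
        · rintro (⟨j, i⟩ | ⟨j, i⟩ | ⟨j, i⟩)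
          · exact h1 j (2 - i) i
          · exact (h3 j i (2 - i)).symm
          · exact h3 j (2 - i) i
        · rintro (⟨j, i⟩ | ⟨j, i⟩ | ⟨j, i⟩) hv
          · rcases Int.even_mul.mp (h4 j i) with h | h
            · exact absurd ((Int.even_coe_nat n).mp h) (Nat.not_even_iff_odd.mpr hno)
            · exact h
          · exact absurd hv (by simp [sig2])
          · exact absurd hv (by simp [sig2])
    · refine ⟨hsum, ?_⟩
      rintro (⟨j, i⟩ | ⟨j, i⟩ | ⟨j, i⟩)
      · exact h1 j (2 - (1 - i)) i
      · exact h2 j (2 - (1 - i)) i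
      · exact (h3 j 0 (2 - (1 - i))).symm.trans (h3 j 0 i)
end

section
/- The quotient group ℒ/ℒ′ is isomorphic to (ℤ/nℤ)^t. -/
open scoped BigOperators

section Helpers

variable (n s t : ℕ) [NeZero n] (w : Vrt n s t → Vrt n s t → ℕ)

/-- The map sending a coefficient vector to the corresponding combination of firing divisors. -/
def Tmap : (Vrt n s t → ℤ) →+ (Vrt n s t → ℤ) where
  toFun c := fun u => ∑ v, c v * fire n s t w v u
  map_zero' := by funext u; simp
  map_add' a b := by funext u; simp [add_mul, Finset.sum_add_distrib]

lemma Tmap_single (v : Vrt n s t) :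
    Tmap n s t w (Pi.single v 1) = fire n s t w v := by
  funext u
  have h0 : Tmap n s t w (Pi.single v 1) u
      = ∑ x, (Pi.single v 1 : Vrt n s t → ℤ) x * fire n s t w x u := rfl
  rw [h0, Finset.sum_eq_single v (fun x _ hx => by simp [Pi.single_eq_of_ne hx])
    (by simp)]
  simp

lemma Tmap_eq_sum (c : Vrt n s t → ℤ) :
    Tmap n s t w c = ∑ v, c v • fire n s t w v := by
  funext u
  simp [Tmap, Finset.sum_apply]

lemma fireLat_eq_range : FireLat n s t w = (Tmap n s t w).range := by
  apply le_antisymm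
  · rw [FireLat]
    rw [AddSubgroup.closure_le]
    rintro _ ⟨v, rfl⟩
    exact ⟨Pi.single v 1, Tmap_single n s t w v⟩
  · rintro _ ⟨c, rfl⟩
    rw [Tmap_eq_sum]
    exact AddSubgroup.sum_mem _ fun v _ =>
      AddSubgroup.zsmul_mem _ (AddSubgroup.subset_closure (Set.mem_range_self v)) _

/-- The homomorphism computing, for each j, the sum of x-coefficients minus y-coefficients
modulo n. -/
def phi0 : (Vrt n s t → ℤ) →+ (Fin t → ZMod n) where
  toFun c := fun j => ((∑ i, (c (xv n s t j i) - c (yv n s t j i)) : ℤ) : ZMod n)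
  map_zero' := by funext j; simp
  map_add' a b := by
    funext j
    simp only [Pi.add_apply]
    rw [← Int.cast_add, ← Finset.sum_add_distrib]
    congr 1
    apply Finset.sum_congr rfl
    intro i _
    ring

lemma phi0_eq_zero_iff (c : Vrt n s t → ℤ) :
    phi0 n s t c = 0 ↔ ∀ j, (n : ℤ) ∣ ∑ i, (c (xv n s t j i) - c (yv n s t j i)) := by
  rw [funext_iff]
  apply forall_congr'
  intro j
  rw [show (0 : Fin t → ZMod n) j = 0 from rfl]
  exact ZMod.intCast_zmod_eq_zero_iff_dvd _ n

/-- Membership helpers for the generators of ℒ′. -/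
lemma genz_mem (j : Fin s) (i : ZMod n) :
    fire n s t w (zv n s t j i) ∈ FireLat' n s t w := by
  apply AddSubgroup.subset_closure
  simp only [Set.mem_union, Set.mem_setOf_eq]
  exact Or.inl (Or.inl (Or.inl ⟨j, i, rfl⟩))

lemma genp_mem (j : Fin t) (i₁ i₂ : ZMod n) :
    fire n s t w (xv n s t j i₁) + fire n s t w (yv n s t j i₂) ∈ FireLat' n s t w := by
  apply AddSubgroup.subset_closure
  simp only [Set.mem_union, Set.mem_setOf_eq]
  exact Or.inl (Or.inl (Or.inr ⟨j, i₁, i₂, rfl⟩))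

lemma genx_mem (j : Fin t) :
    (∑ i, fire n s t w (xv n s t j i)) ∈ FireLat' n s t w := by
  apply AddSubgroup.subset_closure
  simp only [Set.mem_union, Set.mem_setOf_eq]
  exact Or.inl (Or.inr ⟨j, rfl⟩)

lemma geny_mem (j : Fin t) :
    (∑ i, fire n s t w (yv n s t j i)) ∈ FireLat' n s t w := by
  apply AddSubgroup.subset_closure
  simp only [Set.mem_union, Set.mem_setOf_eq]
  exact Or.inr ⟨j, rfl⟩

lemma card_zmod : (Finset.univ : Finset (ZMod n)).card = n := by
  rw [Finset.card_univ]; exact ZMod.card n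

lemma nsmul_fy_mem (j : Fin t) :
    (n : ℤ) • fire n s t w (yv n s t j 0) ∈ FireLat' n s t w := by
  have key : (n : ℤ) • fire n s t w (yv n s t j 0)
      = (∑ i, fire n s t w (yv n s t j i))
        + ∑ i : ZMod n, ((fire n s t w (xv n s t j 0) + fire n s t w (yv n s t j 0))
            - (fire n s t w (xv n s t j 0) + fire n s t w (yv n s t j i))) := by
    simp only [add_sub_add_left_eq_sub]
    rw [Finset.sum_sub_distrib, Finset.sum_const, card_zmod, natCast_zsmul]
    abel
  rw [key]
  exact AddSubgroup.add_mem _ (geny_mem n s t w j)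
    (AddSubgroup.sum_mem _ fun i _ =>
      AddSubgroup.sub_mem _ (genp_mem n s t w j 0 0) (genp_mem n s t w j 0 i))

lemma xy_mem (j : Fin t) (a b : ZMod n → ℤ)
    (hdvd : (n : ℤ) ∣ ∑ i, (a i - b i)) :
    (∑ i, a i • fire n s t w (xv n s t j i))
      + (∑ i, b i • fire n s t w (yv n s t j i)) ∈ FireLat' n s t w := by
  set Fx := fun i => fire n s t w (xv n s t j i) with hFx
  set Fy := fun i => fire n s t w (yv n s t j i) with hFy
  rw [Finset.sum_sub_distrib] at hdvd
  obtain ⟨k, hk⟩ := hdvd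
  have key : (∑ i, a i • Fx i) + (∑ i, b i • Fy i)
      = (∑ i, a i • (Fx i + Fy 0)) + (∑ i, b i • (Fx 0 + Fy i))
        - (∑ i, b i) • (Fx 0 + Fy 0) - k • ((n : ℤ) • Fy 0) := by
    simp only [smul_add, Finset.sum_add_distrib, ← Finset.sum_smul]
    rw [show (∑ i, a i) = (∑ i, b i) + (n : ℤ) * k by linarith]
    module
  rw [key]
  refine AddSubgroup.sub_mem _ (AddSubgroup.sub_mem _ (AddSubgroup.add_mem _ ?_ ?_) ?_) ?_
  · exact AddSubgroup.sum_mem _ fun i _ => AddSubgroup.zsmul_mem _ (genp_mem n s t w j i 0) _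
  · exact AddSubgroup.sum_mem _ fun i _ => AddSubgroup.zsmul_mem _ (genp_mem n s t w j 0 i) _
  · exact AddSubgroup.zsmul_mem _ (genp_mem n s t w j 0 0) _
  · exact AddSubgroup.zsmul_mem _ (nsmul_fy_mem n s t w j) _

lemma ker_to_lat' (c : Vrt n s t → ℤ)
    (hc : ∀ j, (n : ℤ) ∣ ∑ i, (c (xv n s t j i) - c (yv n s t j i))) :
    Tmap n s t w c ∈ FireLat' n s t w := by
  rw [Tmap_eq_sum]
  rw [Fintype.sum_sum_type, Fintype.sum_sum_type]
  refine AddSubgroup.add_mem _ ?_ ?_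
  · rw [Fintype.sum_prod_type]
    exact AddSubgroup.sum_mem _ fun j _ => AddSubgroup.sum_mem _ fun i _ =>
      AddSubgroup.zsmul_mem _ (genz_mem n s t w j i) _
  · rw [Fintype.sum_prod_type, Fintype.sum_prod_type, ← Finset.sum_add_distrib]
    exact AddSubgroup.sum_mem _ fun j _ => xy_mem n s t w j _ _ (hc j)

end Helpers

section Analytic

variable (n s t : ℕ) [NeZero n] (w : Vrt n s t → Vrt n s t → ℕ)

lemma Tmap_apply (hdiag : ∀ v, w v v = 0) (c : Vrt n s t → ℤ) (u : Vrt n s t) :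
    Tmap n s t w c u = ∑ v, (w u v : ℤ) * (c v - c u) := by
  have h0 : Tmap n s t w c u = ∑ v, c v * fire n s t w v u := rfl
  have key : ∀ v, c v * fire n s t w v u
      = (w u v : ℤ) * c v - (if v = u then (∑ x, (w u x : ℤ)) * c u else 0) := by
    intro v
    by_cases h : v = u
    · subst h
      simp only [fire, if_pos rfl, if_pos trivial]
      rw [hdiag v]
      push_cast
      ring
    · simp only [fire, if_neg (Ne.symm h), if_neg h]
      ring
  rw [h0, Finset.sum_congr rfl fun v _ => key v, Finset.sum_sub_distrib,
    Finset.sum_ite_eq' Finset.univ u (fun _ => (∑ x, (w u x : ℤ)) * c u)]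
  simp only [Finset.mem_univ, if_pos, mul_sub]
  rw [Finset.sum_sub_distrib, ← Finset.sum_mul]

lemma edges_const (hsymm : ∀ u v, w u v = w v u) (hdiag : ∀ v, w v v = 0)
    (hconn : (wGraph n s t w).Connected) (c : Vrt n s t → ℤ)
    (hc : Tmap n s t w c = 0) : ∀ u v, c u = c v := by
  have hform : ∀ u, ∑ v, (w u v : ℤ) * (c v - c u) = 0 := by
    intro u
    rw [← Tmap_apply n s t w hdiag c u, hc]
    rfl
  have h1 : ∑ u, ∑ v, (w u v : ℤ) * (c u * (c v - c u)) = 0 := by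
    have hmul : ∀ u : Vrt n s t, ∑ v, (w u v : ℤ) * (c u * (c v - c u))
        = c u * ∑ v, (w u v : ℤ) * (c v - c u) := by
      intro u
      rw [Finset.mul_sum]
      exact Finset.sum_congr rfl fun v _ => by ring
    simp only [hmul, hform, mul_zero, Finset.sum_const_zero]
  have hswap : ∑ u, ∑ v, (w u v : ℤ) * (c u * c u)
      = ∑ u, ∑ v, (w u v : ℤ) * (c v * c v) := by
    rw [Finset.sum_comm]
    exact Finset.sum_congr rfl fun x _ => Finset.sum_congr rfl fun y _ => by rw [hsymm]
  have hsq : ∑ u, ∑ v, (w u v : ℤ) * (c u - c v) ^ 2 = 0 := by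
    have expand : ∀ u v : Vrt n s t, (w u v : ℤ) * (c u - c v) ^ 2
        = ((w u v : ℤ) * (c v * c v) - (w u v : ℤ) * (c u * c u))
          - 2 * ((w u v : ℤ) * (c u * (c v - c u))) := fun u v => by ring
    simp only [expand, Finset.sum_sub_distrib, ← Finset.mul_sum]
    rw [← hswap, h1]
    ring
  have hpt : ∀ u v : Vrt n s t, (w u v : ℤ) * (c u - c v) ^ 2 = 0 := by
    have hnn : ∀ a b : Vrt n s t, 0 ≤ (w a b : ℤ) * (c a - c b) ^ 2 := fun a b =>
      mul_nonneg (Int.natCast_nonneg _) (sq_nonneg _)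
    intro u v
    have h2 := (Finset.sum_eq_zero_iff_of_nonneg
      (fun a _ => Finset.sum_nonneg fun b _ => hnn a b)).mp hsq u (Finset.mem_univ u)
    exact (Finset.sum_eq_zero_iff_of_nonneg (fun b _ => hnn u b)).mp h2 v (Finset.mem_univ v)
  have hedge : ∀ u v, w u v ≠ 0 → c u = c v := by
    intro u v hw
    rcases mul_eq_zero.mp (hpt u v) with h | h
    · exact absurd (Int.natCast_eq_zero.mp h) hw
    · exact sub_eq_zero.mp (sq_eq_zero_iff.mp h)
  intro u v
  obtain ⟨p⟩ := hconn.preconnected u v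
  induction p with
  | nil => rfl
  | cons h q ih =>
    obtain ⟨hne, hor⟩ := h
    rcases hor with hw | hw
    · exact (hedge _ _ hw).trans ih
    · exact (hedge _ _ (by rw [hsymm]; exact hw)).trans ih

lemma phi0_welldef (hsymm : ∀ u v, w u v = w v u) (hdiag : ∀ v, w v v = 0)
    (hconn : (wGraph n s t w).Connected) {c c' : Vrt n s t → ℤ}
    (h : Tmap n s t w c = Tmap n s t w c') : phi0 n s t c = phi0 n s t c' := by
  have h0 : Tmap n s t w (c - c') = 0 := by rw [map_sub, h, sub_self]
  have hconst := edges_const n s t w hsymm hdiag hconn (c - c') h0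
  have hz : phi0 n s t (c - c') = 0 := by
    funext j
    have hs : ∑ i, ((c - c') (xv n s t j i) - (c - c') (yv n s t j i)) = 0 :=
      Finset.sum_eq_zero fun i _ => by
        rw [hconst (xv n s t j i) (yv n s t j i), sub_self]
    have h0' : phi0 n s t (c - c') j
        = ((∑ i, ((c - c') (xv n s t j i) - (c - c') (yv n s t j i)) : ℤ) : ZMod n) := rfl
    rw [h0', hs]
    simp
  have hsub : phi0 n s t c - phi0 n s t c' = 0 := by rw [← map_sub, hz]
  exact sub_eq_zero.mp hsub

end Analytic

section Lat'

set_option linter.unusedSectionVars false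

variable (n s t : ℕ) [NeZero n] (w : Vrt n s t → Vrt n s t → ℕ)

lemma single_z_apply_x (j : Fin s) (i : ZMod n) (j' : Fin t) (i' : ZMod n) :
    (Pi.single (zv n s t j i) 1 : Vrt n s t → ℤ) (xv n s t j' i') = 0 :=
  Pi.single_eq_of_ne (by simp [xv, zv]) 1

lemma single_z_apply_y (j : Fin s) (i : ZMod n) (j' : Fin t) (i' : ZMod n) :
    (Pi.single (zv n s t j i) 1 : Vrt n s t → ℤ) (yv n s t j' i') = 0 :=
  Pi.single_eq_of_ne (by simp [yv, zv]) 1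

lemma single_x_apply_x (j : Fin t) (i : ZMod n) (j' : Fin t) (i' : ZMod n) :
    (Pi.single (xv n s t j i) 1 : Vrt n s t → ℤ) (xv n s t j' i')
      = if j' = j ∧ i' = i then 1 else 0 := by
  rw [Pi.single_apply]
  by_cases hj : j' = j <;> by_cases hi : i' = i <;>
    simp [xv, hj, hi, Prod.ext_iff]

lemma single_x_apply_y (j : Fin t) (i : ZMod n) (j' : Fin t) (i' : ZMod n) :
    (Pi.single (xv n s t j i) 1 : Vrt n s t → ℤ) (yv n s t j' i') = 0 :=
  Pi.single_eq_of_ne (by simp [xv, yv]) 1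

lemma single_y_apply_y (j : Fin t) (i : ZMod n) (j' : Fin t) (i' : ZMod n) :
    (Pi.single (yv n s t j i) 1 : Vrt n s t → ℤ) (yv n s t j' i')
      = if j' = j ∧ i' = i then 1 else 0 := by
  rw [Pi.single_apply]
  by_cases hj : j' = j <;> by_cases hi : i' = i <;>
    simp [yv, hj, hi, Prod.ext_iff]

lemma single_y_apply_x (j : Fin t) (i : ZMod n) (j' : Fin t) (i' : ZMod n) :
    (Pi.single (yv n s t j i) 1 : Vrt n s t → ℤ) (xv n s t j' i') = 0 :=
  Pi.single_eq_of_ne (by simp [xv, yv]) 1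

lemma sum_ite_and (j j' : Fin t) (i1 : ZMod n) :
    ∑ i : ZMod n, (if j' = j ∧ i = i1 then (1 : ℤ) else 0)
      = if j' = j then 1 else 0 := by
  by_cases hj : j' = j
  · simp [hj]
  · simp [hj]

lemma lat'_le_map :
    FireLat' n s t w ≤ ((phi0 n s t).ker).map (Tmap n s t w) := by
  rw [FireLat', AddSubgroup.closure_le]
  rintro d (((⟨j, i, rfl⟩ | ⟨j, i1, i2, rfl⟩) | ⟨j, rfl⟩) | ⟨j, rfl⟩)
  · rw [SetLike.mem_coe, AddSubgroup.mem_map]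
    refine ⟨Pi.single (zv n s t j i) 1, ?_, Tmap_single n s t w _⟩
    rw [AddMonoidHom.mem_ker, phi0_eq_zero_iff]
    intro j'
    have hz : ∑ i', ((Pi.single (zv n s t j i) 1 : Vrt n s t → ℤ) (xv n s t j' i')
        - (Pi.single (zv n s t j i) 1 : Vrt n s t → ℤ) (yv n s t j' i')) = 0 :=
      Finset.sum_eq_zero fun i' _ => by
        rw [single_z_apply_x, single_z_apply_y, sub_self]
    rw [hz]
    exact dvd_zero _
  · rw [SetLike.mem_coe, AddSubgroup.mem_map]
    refine ⟨Pi.single (xv n s t j i1) 1 + Pi.single (yv n s t j i2) 1, ?_, ?_⟩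
    · rw [AddMonoidHom.mem_ker, phi0_eq_zero_iff]
      intro j'
      have hs : ∑ i, (((Pi.single (xv n s t j i1) 1 + Pi.single (yv n s t j i2) 1 : Vrt n s t → ℤ))
            (xv n s t j' i)
          - ((Pi.single (xv n s t j i1) 1 + Pi.single (yv n s t j i2) 1 : Vrt n s t → ℤ))
            (yv n s t j' i))
          = ∑ i : ZMod n, ((if j' = j ∧ i = i1 then (1:ℤ) else 0)
            - (if j' = j ∧ i = i2 then (1:ℤ) else 0)) := by
        refine Finset.sum_congr rfl fun i _ => ?_
        simp only [Pi.add_apply, single_x_apply_x, single_x_apply_y,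
          single_y_apply_x, single_y_apply_y, add_zero, zero_add]
      rw [hs, Finset.sum_sub_distrib, sum_ite_and, sum_ite_and, sub_self]
      exact dvd_zero _
    · rw [map_add, Tmap_single, Tmap_single]
  · rw [SetLike.mem_coe, AddSubgroup.mem_map]
    refine ⟨∑ i, Pi.single (xv n s t j i) 1, ?_, ?_⟩
    · rw [AddMonoidHom.mem_ker, phi0_eq_zero_iff]
      intro j'
      have hs : ∑ i, (((∑ i', Pi.single (xv n s t j i') 1 : Vrt n s t → ℤ)) (xv n s t j' i)
          - ((∑ i', Pi.single (xv n s t j i') 1 : Vrt n s t → ℤ)) (yv n s t j' i))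
          = ∑ i : ZMod n, (if j' = j then (1:ℤ) else 0) := by
        refine Finset.sum_congr rfl fun i _ => ?_
        rw [Finset.sum_apply, Finset.sum_apply]
        rw [Finset.sum_congr rfl fun i' _ => single_x_apply_x n s t j i' j' i,
          Finset.sum_congr rfl fun i' _ => single_x_apply_y n s t j i' j' i]
        rw [Finset.sum_const_zero, sub_zero]
        by_cases hj : j' = j
        · simp [hj]
        · simp [hj]
      rw [hs, Finset.sum_const, card_zmod]
      by_cases hj : j' = j
      · simp [hj]
      · simp [hj]
    · rw [map_sum]
      exact Finset.sum_congr rfl fun i _ => Tmap_single n s t w _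
  · rw [SetLike.mem_coe, AddSubgroup.mem_map]
    refine ⟨∑ i, Pi.single (yv n s t j i) 1, ?_, ?_⟩
    · rw [AddMonoidHom.mem_ker, phi0_eq_zero_iff]
      intro j'
      have hs : ∑ i, (((∑ i', Pi.single (yv n s t j i') 1 : Vrt n s t → ℤ)) (xv n s t j' i)
          - ((∑ i', Pi.single (yv n s t j i') 1 : Vrt n s t → ℤ)) (yv n s t j' i))
          = ∑ i : ZMod n, (-(if j' = j then (1:ℤ) else 0)) := by
        refine Finset.sum_congr rfl fun i _ => ?_
        rw [Finset.sum_apply, Finset.sum_apply]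
        rw [Finset.sum_congr rfl fun i' _ => single_y_apply_x n s t j i' j' i,
          Finset.sum_congr rfl fun i' _ => single_y_apply_y n s t j i' j' i]
        rw [Finset.sum_const_zero, zero_sub]
        by_cases hj : j' = j
        · simp [hj]
        · simp [hj]
      rw [hs, Finset.sum_const, card_zmod]
      by_cases hj : j' = j
      · simp [hj]
      · simp [hj]
    · rw [map_sum]
      exact Finset.sum_congr rfl fun i _ => Tmap_single n s t w _

end Lat'

/-- **ℒ/ℒ′ ≅ (ℤ/nℤ)^t.** -/
theorem lat_quot_lat' (n s t : ℕ) [NeZero n] (hn : 3 ≤ n)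
    (w : Vrt n s t → Vrt n s t → ℕ)
    (hsymm : ∀ u v, w u v = w v u) (hdiag : ∀ v, w v v = 0)
    (hinv1 : ∀ u v, w (sig1 n s t u) (sig1 n s t v) = w u v)
    (hinv2 : ∀ u v, w (sig2 n s t u) (sig2 n s t v) = w u v)
    (hconn : (wGraph n s t w).Connected)
    (hharm : Harmonic n s t w) :
    Nonempty ((FireLat n s t w ⧸
        ((FireLat' n s t w).addSubgroupOf (FireLat n s t w))) ≃+
      (Fin t → ZMod n)) := by
  classical
  have hrange : ∀ d, d ∈ FireLat n s t w ↔ ∃ c, Tmap n s t w c = d := by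
    intro d
    rw [fireLat_eq_range]
    exact AddMonoidHom.mem_range
  have hwd : ∀ {c c' : Vrt n s t → ℤ}, Tmap n s t w c = Tmap n s t w c' →
      phi0 n s t c = phi0 n s t c' := fun h => phi0_welldef n s t w hsymm hdiag hconn h
  set pick : (FireLat n s t w) → (Vrt n s t → ℤ) :=
    fun δ => ((hrange δ.1).mp δ.2).choose with hpickdef
  have hpick : ∀ δ : FireLat n s t w, Tmap n s t w (pick δ) = δ.1 :=
    fun δ => ((hrange δ.1).mp δ.2).choose_spec
  set F : (FireLat n s t w) →+ (Fin t → ZMod n) :=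
  { toFun := fun δ => phi0 n s t (pick δ)
    map_zero' := by
      have h0 : Tmap n s t w (pick 0) = Tmap n s t w 0 := by
        rw [hpick, map_zero]; rfl
      show phi0 n s t (pick 0) = 0
      rw [hwd h0, map_zero]
    map_add' := fun δ1 δ2 => by
      have h0 : Tmap n s t w (pick (δ1 + δ2)) = Tmap n s t w (pick δ1 + pick δ2) := by
        rw [map_add, hpick, hpick, hpick]; rfl
      show phi0 n s t (pick (δ1 + δ2)) = phi0 n s t (pick δ1) + phi0 n s t (pick δ2)
      rw [hwd h0, map_add] } with hFdef
  have hFapp : ∀ δ : FireLat n s t w, F δ = phi0 n s t (pick δ) := fun δ => rfl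
  have hsurj : Function.Surjective F := by
    intro f
    set c : Vrt n s t → ℤ := fun v =>
      Sum.elim (fun _ => 0)
        (Sum.elim (fun p => if p.2 = 0 then ((f p.1).val : ℤ) else 0) fun _ => 0) v
      with hcdef
    have hm : Tmap n s t w c ∈ FireLat n s t w := (hrange _).mpr ⟨c, rfl⟩
    refine ⟨⟨Tmap n s t w c, hm⟩, ?_⟩
    rw [hFapp, hwd (hpick ⟨Tmap n s t w c, hm⟩)]
    funext j
    have hx : ∀ i : ZMod n, c (xv n s t j i) = if i = 0 then ((f j).val : ℤ) else 0 :=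
      fun i => rfl
    have hy : ∀ i : ZMod n, c (yv n s t j i) = 0 := fun i => rfl
    have hsum : ∑ i, (c (xv n s t j i) - c (yv n s t j i)) = ((f j).val : ℤ) := by
      simp only [hx, hy, sub_zero]
      rw [Finset.sum_ite_eq' Finset.univ (0 : ZMod n) (fun _ => ((f j).val : ℤ))]
      simp
    have h0' : phi0 n s t c j
        = ((∑ i, (c (xv n s t j i) - c (yv n s t j i)) : ℤ) : ZMod n) := rfl
    rw [h0', hsum]
    push_cast
    simp [ZMod.natCast_val, ZMod.cast_id]
  have hker : F.ker = (FireLat' n s t w).addSubgroupOf (FireLat n s t w) := by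
    ext δ
    simp only [AddMonoidHom.mem_ker, AddSubgroup.mem_addSubgroupOf]
    constructor
    · intro h0
      rw [hFapp] at h0
      have hdvd := (phi0_eq_zero_iff n s t (pick δ)).mp h0
      rw [← hpick δ]
      exact ker_to_lat' n s t w _ hdvd
    · intro hmem
      obtain ⟨c, hc0, hcT⟩ := AddSubgroup.mem_map.mp (lat'_le_map n s t w hmem)
      rw [hFapp, hwd (by rw [hpick, hcT] : Tmap n s t w (pick δ) = Tmap n s t w c), hc0]
  exact ⟨(QuotientAddGroup.quotientAddEquivOfEq hker.symm).trans
    (QuotientAddGroup.quotientKerEquivOfSurjective F hsurj)⟩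
end
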